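/- arXiv:2012.09839 — 7 statements merged into one kernel-verified Lean document; each statement's English description precedes it below -/
import Mathlib

section
/- Let d, r be positive integers, let f : ℝ^{d×d} → ℝ be differentiable, let U₀ ∈ ℝ^{d×r}, and let W₀ := U₀U₀ᵀ. Assume the gradient matrix ∇f(W₀) is symmetric. Then the following are equivalent: (1) U₀ is a stationary point of L(U) := (1/2)·f(UUᵀ), i.e. the Fréchet derivative of L at U₀ vanishes (equivalently ∇f(W₀)U₀ = 0); (2) ∇f(W₀)·W₀ = 0; (3) W₀·∇f(W₀) + ∇f(W₀)·W₀ = 0. -/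
open Matrix

attribute [local instance] Matrix.frobeniusNormedAddCommGroup Matrix.frobeniusNormedSpace

private lemma eq_zero_of_trace {a b : ℕ} {M : Matrix (Fin a) (Fin b) ℝ}
    (h : (M * Mᵀ).trace = 0) : M = 0 := by
  have h2 : ∑ i, ∑ j, M i j * M i j = 0 := by
    simpa [Matrix.trace, Matrix.mul_apply, Matrix.diag] using h
  ext i j
  have hi := (Finset.sum_eq_zero_iff_of_nonneg
    (fun i _ => Finset.sum_nonneg fun j _ => mul_self_nonneg (M i j))).1 h2 i (Finset.mem_univ i)
  have hij := (Finset.sum_eq_zero_iff_of_nonneg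
    (fun j _ => mul_self_nonneg (M i j))).1 hi j (Finset.mem_univ j)
  simpa using mul_self_eq_zero.1 hij

noncomputable def mulCLM (d r : ℕ) :
    Matrix (Fin d) (Fin r) ℝ →L[ℝ] Matrix (Fin r) (Fin d) ℝ →L[ℝ] Matrix (Fin d) (Fin d) ℝ :=
  LinearMap.toContinuousLinearMap
    { toFun := fun A => LinearMap.toContinuousLinearMap
        { toFun := fun B => A * B
          map_add' := fun B C => Matrix.mul_add A B C
          map_smul' := fun c B => Matrix.mul_smul A c B }
      map_add' := fun A B => by ext C i j; simp [Matrix.add_mul]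
      map_smul' := fun c A => by ext B i j; simp [Matrix.smul_mul] }

@[simp] lemma mulCLM_apply {d r : ℕ} (A : Matrix (Fin d) (Fin r) ℝ)
    (B : Matrix (Fin r) (Fin d) ℝ) : mulCLM d r A B = A * B := rfl

noncomputable def transCLM (d r : ℕ) :
    Matrix (Fin d) (Fin r) ℝ →L[ℝ] Matrix (Fin r) (Fin d) ℝ :=
  LinearMap.toContinuousLinearMap
    { toFun := fun A => Aᵀ
      map_add' := fun A B => Matrix.transpose_add A B
      map_smul' := fun c A => Matrix.transpose_smul c A }

@[simp] lemma transCLM_apply {d r : ℕ} (A : Matrix (Fin d) (Fin r) ℝ) :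
    transCLM d r A = Aᵀ := rfl

/-- For `f : ℝ^{d×d} → ℝ` differentiable with gradient matrix `G` at
`W₀ := U₀ * U₀ᵀ` (i.e. `⟨G, Δ⟩ = Df(W₀)[Δ]` for the Frobenius inner product
`⟨A, B⟩ = tr (A * Bᵀ)`), assuming `G` is symmetric, the following are equivalent:
(1) `U₀` is a stationary point of `L(U) = (1/2) f (U Uᵀ)`;
(2) `G * W₀ = 0`;
(3) `W₀ * G + G * W₀ = 0`. -/
theorem stmt0 {d r : ℕ} (hd : 0 < d) (hr : 0 < r)
    (f : Matrix (Fin d) (Fin d) ℝ → ℝ) (hf : Differentiable ℝ f)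
    (U₀ : Matrix (Fin d) (Fin r) ℝ) (W₀ : Matrix (Fin d) (Fin d) ℝ)
    (hW₀ : W₀ = U₀ * U₀ᵀ)
    (G : Matrix (Fin d) (Fin d) ℝ)
    (hG : ∀ Δ : Matrix (Fin d) (Fin d) ℝ, fderiv ℝ f W₀ Δ = (G * Δᵀ).trace)
    (hGsymm : Gᵀ = G) :
    [ fderiv ℝ (fun U : Matrix (Fin d) (Fin r) ℝ => (1 / 2 : ℝ) * f (U * Uᵀ)) U₀ = 0,
      G * W₀ = 0,
      W₀ * G + G * W₀ = 0 ].TFAE := by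
  subst hW₀
  set D := (mulCLM d r).precompR (Matrix (Fin d) (Fin r) ℝ) U₀ (transCLM d r) +
      (mulCLM d r).precompL _ (ContinuousLinearMap.id ℝ _) U₀ᵀ with hD
  have hg : HasFDerivAt (fun U : Matrix (Fin d) (Fin r) ℝ => U * Uᵀ) D U₀ := by
    have := (mulCLM d r).hasFDerivAt_of_bilinear (hasFDerivAt_id U₀)
      ((transCLM d r).hasFDerivAt (x := U₀))
    simp only [mulCLM_apply, transCLM_apply] at this
    exact this
  have hfd : HasFDerivAt (fun U : Matrix (Fin d) (Fin r) ℝ => (1 / 2 : ℝ) * f (U * Uᵀ))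
      ((1 / 2 : ℝ) • ((fderiv ℝ f (U₀ * U₀ᵀ)).comp D)) U₀ :=
    ((hf (U₀ * U₀ᵀ)).hasFDerivAt.comp U₀ hg).const_mul (1 / 2)
  -- value of the derivative
  have happly : ∀ Δ : Matrix (Fin d) (Fin r) ℝ,
      fderiv ℝ (fun U : Matrix (Fin d) (Fin r) ℝ => (1 / 2 : ℝ) * f (U * Uᵀ)) U₀ Δ
        = ((G * U₀) * Δᵀ).trace := by
    intro Δ
    erw [hfd.fderiv]
    have hDΔ : D Δ = U₀ * Δᵀ + Δ * U₀ᵀ := by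
      rfl
    have h1 : (G * (Δ * U₀ᵀ)ᵀ).trace = ((G * U₀) * Δᵀ).trace := by
      rw [Matrix.transpose_mul, Matrix.transpose_transpose, ← Matrix.mul_assoc]
    have h2 : (G * (U₀ * Δᵀ)ᵀ).trace = ((G * U₀) * Δᵀ).trace := by
      calc (G * (U₀ * Δᵀ)ᵀ).trace
          = (G * (Δ * U₀ᵀ)).trace := by rw [Matrix.transpose_mul, Matrix.transpose_transpose]
        _ = ((Δ * U₀ᵀ) * G).trace := Matrix.trace_mul_comm _ _
        _ = (Δ * (U₀ᵀ * G)).trace := by rw [Matrix.mul_assoc]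
        _ = ((U₀ᵀ * G) * Δ).trace := Matrix.trace_mul_comm _ _
        _ = (((U₀ᵀ * G) * Δ)ᵀ).trace := (Matrix.trace_transpose _).symm
        _ = (Δᵀ * (Gᵀ * U₀ᵀᵀ)).trace := by rw [Matrix.transpose_mul, Matrix.transpose_mul]
        _ = (Δᵀ * (G * U₀)).trace := by rw [hGsymm, Matrix.transpose_transpose]
        _ = ((G * U₀) * Δᵀ).trace := Matrix.trace_mul_comm _ _
    calc ((1 / 2 : ℝ) • ((fderiv ℝ f (U₀ * U₀ᵀ)).comp D)) Δ
        = (1 / 2 : ℝ) * fderiv ℝ f (U₀ * U₀ᵀ) (D Δ) := rfl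
      _ = (1 / 2 : ℝ) * (G * (U₀ * Δᵀ + Δ * U₀ᵀ)ᵀ).trace := by rw [hDΔ, hG]
      _ = (1 / 2 : ℝ) * ((G * (U₀ * Δᵀ)ᵀ).trace + (G * (Δ * U₀ᵀ)ᵀ).trace) := by
          rw [Matrix.transpose_add, Matrix.mul_add, Matrix.trace_add]
      _ = ((G * U₀) * Δᵀ).trace := by rw [h1, h2]; ring
  -- (1) ↔ G * U₀ = 0
  have h1iff : fderiv ℝ (fun U : Matrix (Fin d) (Fin r) ℝ => (1 / 2 : ℝ) * f (U * Uᵀ)) U₀ = 0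
      ↔ G * U₀ = 0 := by
    constructor
    · intro h
      apply eq_zero_of_trace
      have := happly (G * U₀)
      rw [h] at this
      simpa using this.symm
    · intro h
      ext Δ
      rw [ContinuousLinearMap.zero_apply, happly, h, Matrix.zero_mul, Matrix.trace_zero]
  have hGU_of_trace : ((G * (U₀ * U₀ᵀ)) * G).trace = 0 → G * U₀ = 0 := by
    intro h
    apply eq_zero_of_trace
    have : (G * U₀) * (G * U₀)ᵀ = (G * (U₀ * U₀ᵀ)) * G := by
      rw [Matrix.transpose_mul, hGsymm, Matrix.mul_assoc, Matrix.mul_assoc, Matrix.mul_assoc]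
    rw [this, h]
  tfae_have 1 → 2 := by
    intro h
    rw [← Matrix.mul_assoc, h1iff.1 h, Matrix.zero_mul]
  tfae_have 2 → 3 := by
    intro h
    have hW : (U₀ * U₀ᵀ) * G = 0 := by
      have : (U₀ * U₀ᵀ) * G = (G * (U₀ * U₀ᵀ))ᵀ := by
        rw [Matrix.transpose_mul, hGsymm, Matrix.transpose_mul, Matrix.transpose_transpose]
      rw [this, h, Matrix.transpose_zero]
    rw [h, hW, add_zero]
  tfae_have 3 → 2 := by
    intro h
    have hW : (U₀ * U₀ᵀ) * G = -(G * (U₀ * U₀ᵀ)) := by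
      rwa [add_eq_zero_iff_eq_neg] at h
    have htr : ((G * (U₀ * U₀ᵀ)) * G).trace = 0 := by
      have hflip : ((G * (U₀ * U₀ᵀ)) * G).trace = -(((G * (U₀ * U₀ᵀ)) * G).trace) := by
        calc ((G * (U₀ * U₀ᵀ)) * G).trace
            = (G * ((U₀ * U₀ᵀ) * G)).trace := by rw [Matrix.mul_assoc]
          _ = (G * -(G * (U₀ * U₀ᵀ))).trace := by rw [hW]
          _ = -((G * (G * (U₀ * U₀ᵀ))).trace) := by rw [Matrix.mul_neg, Matrix.trace_neg]
          _ = -(((G * (U₀ * U₀ᵀ)) * G).trace) := by rw [Matrix.trace_mul_comm]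
      linarith
    have := hGU_of_trace htr
    rw [← Matrix.mul_assoc, this, Matrix.zero_mul]
  tfae_have 2 → 1 := by
    intro h
    exact h1iff.2 (hGU_of_trace (by rw [h, Matrix.zero_mul, Matrix.trace_zero]))
  tfae_finish
end

section
/- Let f : ℝ^{d×d} → ℝ be convex and differentiable, let U₀ ∈ ℝ^{d×r} be a stationary point of L(U) := (1/2)·f(UUᵀ) (equivalently ∇f(W₀)U₀ = 0, where W₀ := U₀U₀ᵀ), and assume ∇f(W₀) is symmetric. Then W₀ attains the minimum of f over the cone {W ∈ ℝ^{d×d} : W positive semidefinite} if and only if ∇f(W₀) is positive semidefinite. -/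
open Matrix

attribute [local instance] Matrix.frobeniusNormedAddCommGroup Matrix.frobeniusNormedSpace

lemma psd_trace_nonneg {n : ℕ} {M : Matrix (Fin n) (Fin n) ℝ} (hM : M.PosSemidef) :
    0 ≤ M.trace := by
  rw [Matrix.trace]
  refine Finset.sum_nonneg fun i _ => ?_
  have := hM.dotProduct_mulVec_nonneg (Pi.single i 1)
  simpa [Matrix.diag, Matrix.mulVec_single, dotProduct, Pi.single_apply] using this

lemma line_hasDerivAt {d : ℕ}
    (f : Matrix (Fin d) (Fin d) ℝ → ℝ) (hf : Differentiable ℝ f)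
    (W₀ Δ : Matrix (Fin d) (Fin d) ℝ) :
    HasDerivAt (fun t : ℝ => f (W₀ + t • Δ)) (fderiv ℝ f W₀ Δ) 0 := by
  have hline : HasDerivAt (fun t : ℝ => W₀ + t • Δ) Δ 0 := by
    have h := ((hasDerivAt_id (0:ℝ)).smul_const Δ).const_add W₀
    rw [one_smul] at h
    exact h
  have := (hf (W₀ + (0:ℝ) • Δ)).hasFDerivAt.comp_hasDerivAt 0 hline
  rw [zero_smul, add_zero] at this
  exact this

lemma line_convexOn {d : ℕ}
    (f : Matrix (Fin d) (Fin d) ℝ → ℝ) (hconv : ConvexOn ℝ Set.univ f)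
    (W₀ Δ : Matrix (Fin d) (Fin d) ℝ) :
    ConvexOn ℝ Set.univ (fun t : ℝ => f (W₀ + t • Δ)) := by
  refine ⟨convex_univ, fun s _ t _ a b ha hb hab => ?_⟩
  have key : W₀ + (a * s + b * t) • Δ = a • (W₀ + s • Δ) + b • (W₀ + t • Δ) := by
    match_scalars
    · linear_combination -hab
    · ring
  simp only [smul_eq_mul, key]
  exact hconv.2 (Set.mem_univ _) (Set.mem_univ _) ha hb hab

/-- Let `f : ℝ^{d×d} → ℝ` be convex and differentiable, let `U₀ ∈ ℝ^{d×r}` be a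
stationary point of `L(U) = (1/2) f (U Uᵀ)` (equivalently `∇f(W₀) * U₀ = 0` where `W₀ = U₀U₀ᵀ`),
with `G = ∇f(W₀)` the gradient matrix (w.r.t. the Frobenius inner product `⟨A,B⟩ = tr (A Bᵀ)`)
assumed symmetric. Then `W₀` minimizes `f` over the PSD cone iff `G` is positive semidefinite. -/
theorem stmt1 {d r : ℕ}
    (f : Matrix (Fin d) (Fin d) ℝ → ℝ) (hf : Differentiable ℝ f)
    (hconv : ConvexOn ℝ Set.univ f)
    (U₀ : Matrix (Fin d) (Fin r) ℝ) (W₀ : Matrix (Fin d) (Fin d) ℝ)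
    (hW₀ : W₀ = U₀ * U₀ᵀ)
    (G : Matrix (Fin d) (Fin d) ℝ)
    (hG : ∀ Δ : Matrix (Fin d) (Fin d) ℝ, fderiv ℝ f W₀ Δ = (G * Δᵀ).trace)
    (hGsymm : Gᵀ = G)
    (hstat : G * U₀ = 0) :
    (∀ W : Matrix (Fin d) (Fin d) ℝ, W.PosSemidef → f W₀ ≤ f W) ↔ G.PosSemidef := by
  have hW₀psd : W₀.PosSemidef := by
    rw [hW₀, show U₀ᵀ = U₀ᴴ from (Matrix.conjTranspose_eq_transpose_of_trivial U₀).symm]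
    exact Matrix.posSemidef_self_mul_conjTranspose U₀
  have htraceW₀ : (G * W₀ᵀ).trace = 0 := by
    have : W₀ᵀ = W₀ := by rw [hW₀, Matrix.transpose_mul, Matrix.transpose_transpose]
    rw [this, hW₀, ← Matrix.mul_assoc, hstat, Matrix.zero_mul, Matrix.trace_zero]
  constructor
  · intro hmin
    refine Matrix.PosSemidef.of_dotProduct_mulVec_nonneg ?_ ?_
    · rw [Matrix.IsHermitian, Matrix.conjTranspose_eq_transpose_of_trivial]
      exact hGsymm
    · intro x
      set D : Matrix (Fin d) (Fin d) ℝ := Matrix.vecMulVec x x with hD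
      have hDsymm : Dᵀ = D := by
        ext i j
        simp [hD, Matrix.vecMulVec, mul_comm]
      have hDpsd : D.PosSemidef := by
        refine Matrix.PosSemidef.of_dotProduct_mulVec_nonneg ?_ ?_
        · rw [Matrix.IsHermitian, Matrix.conjTranspose_eq_transpose_of_trivial]
          exact hDsymm
        · intro y
          have : star y ⬝ᵥ D *ᵥ y = (x ⬝ᵥ y) * (x ⬝ᵥ y) := by
            simp [hD, Matrix.vecMulVec, dotProduct, Matrix.mulVec,
              Finset.sum_mul, Finset.mul_sum]
            ring_nf
            rw [Finset.sum_comm]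
            congr 1; ext i; congr 1; ext j; ring
          rw [this]
          exact mul_self_nonneg _
      set φ : ℝ → ℝ := fun t => f (W₀ + t • D) with hφ
      have hderiv : HasDerivAt φ ((G * Dᵀ).trace) 0 := by
        have := line_hasDerivAt f hf W₀ D
        rwa [hG D] at this
      have hφ0 : φ 0 = f W₀ := by simp [hφ]
      have hmono : ∀ t : ℝ, 0 < t → 0 ≤ slope φ 0 t := by
        intro t ht
        have hsmul : (t • D).PosSemidef := by
          refine Matrix.PosSemidef.of_dotProduct_mulVec_nonneg ?_ (fun y => ?_)
          · rw [Matrix.IsHermitian, Matrix.conjTranspose_smul,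
              Matrix.conjTranspose_eq_transpose_of_trivial, hDsymm]
            simp
          · have := hDpsd.dotProduct_mulVec_nonneg y
            rw [Matrix.smul_mulVec, dotProduct_smul]
            exact mul_nonneg ht.le this
        have hpsd : (W₀ + t • D).PosSemidef := hW₀psd.add hsmul
        have := hmin _ hpsd
        rw [slope_def_field]
        have h1 : φ 0 ≤ φ t := by rw [hφ0]; exact this
        have := div_nonneg (sub_nonneg.mpr h1) ht.le
        simpa [div_eq_inv_mul] using this
      have hlim : Filter.Tendsto (slope φ 0) (nhdsWithin 0 (Set.Ioi 0)) (nhds ((G * Dᵀ).trace)) := by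
        have := hasDerivAt_iff_tendsto_slope.mp hderiv
        exact this.mono_left (nhdsWithin_mono 0 (fun t ht => ne_of_gt ht))
      have hge : 0 ≤ (G * Dᵀ).trace := by
        refine ge_of_tendsto hlim ?_
        filter_upwards [self_mem_nhdsWithin] with t ht
        exact hmono t ht
      have hcompute : (G * Dᵀ).trace = star x ⬝ᵥ G *ᵥ x := by
        rw [hDsymm]
        simp [hD, Matrix.trace, Matrix.diag, Matrix.mul_apply, Matrix.vecMulVec,
          dotProduct, Matrix.mulVec, Finset.mul_sum]
        rw [Finset.sum_comm]
        congr 1; ext i; congr 1; ext j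
        have : G j i = G i j := by
          rw [← congrFun (congrFun hGsymm i) j, Matrix.transpose_apply]
        rw [this]; ring
      rwa [hcompute] at hge
  · intro hGpsd W hW
    have hWsymm : Wᵀ = W := by
      rw [← Matrix.conjTranspose_eq_transpose_of_trivial]
      exact hW.1
    have htraceW : 0 ≤ (G * Wᵀ).trace := by
      rw [hWsymm]
      obtain ⟨B, rfl⟩ : ∃ B : Matrix (Fin d) (Fin d) ℝ, W = Bᴴ * B := by
        open scoped MatrixOrder in
        exact CStarAlgebra.nonneg_iff_eq_star_mul_self.mp hW.nonneg
      have : (G * (Bᴴ * B)).trace = (B * G * Bᴴ).trace := by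
        rw [Matrix.trace_mul_comm, Matrix.mul_assoc, Matrix.trace_mul_comm (Bᴴ),
          Matrix.mul_assoc]
      rw [this]
      exact psd_trace_nonneg (hGpsd.mul_mul_conjTranspose_same B)
    set φ : ℝ → ℝ := fun t => f (W₀ + t • (W - W₀)) with hφ
    have hderiv : HasDerivAt φ ((G * (W - W₀)ᵀ).trace) 0 := by
      have := line_hasDerivAt f hf W₀ (W - W₀)
      rwa [hG (W - W₀)] at this
    have hconvφ : ConvexOn ℝ Set.univ φ := line_convexOn f hconv W₀ (W - W₀)
    have hslope : (G * (W - W₀)ᵀ).trace ≤ slope φ 0 1 :=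
      hconvφ.le_slope_of_hasDerivAt (Set.mem_univ 0) (Set.mem_univ 1) one_pos hderiv
    have hφ0 : φ 0 = f W₀ := by simp [hφ]
    have hφ1 : φ 1 = f W := by simp [hφ]
    rw [slope_def_field, hφ0, hφ1] at hslope
    have htr : 0 ≤ (G * (W - W₀)ᵀ).trace := by
      rw [Matrix.transpose_sub, Matrix.mul_sub, Matrix.trace_sub, htraceW₀, sub_zero]
      exact htraceW
    have : 0 ≤ (f W - f W₀) / (1 - 0) := le_trans htr hslope
    linarith [this]
end

section
/- Fix a real number R > 1. Let M be any real positive semidefinite 4×4 matrix with M₁₃ = M₃₁ = 1, M₁₄ = M₄₁ = R, and M₂₃ = M₃₂ = R. Then tr(M) ≥ 4R (equivalently, since M is PSD, its nuclear norm is at least 4R). Moreover, tr(M) = 4R holds if and only if M = M_norm, where M_norm is the 4×4 matrix with rows (R, 1, 1, R), (1, R, R, 1), (1, R, R, 1), (R, 1, 1, R). -/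
open Matrix

/-- Fix `R > 1`.  Any real PSD `4×4` matrix `M` with `M₁₃ = M₃₁ = 1`,
`M₁₄ = M₄₁ = R`, `M₂₃ = M₃₂ = R` (1-indexed; 0-indexed below) satisfies `tr M ≥ 4R`, with
equality iff `M = M_norm`, where `M_norm` has rows `(R,1,1,R), (1,R,R,1), (1,R,R,1),
(R,1,1,R)`. -/
theorem stmt10 (R : ℝ) (hR : 1 < R)
    (M : Matrix (Fin 4) (Fin 4) ℝ) (hM : M.PosSemidef)
    (h13 : M 0 2 = 1) (h31 : M 2 0 = 1)
    (h14 : M 0 3 = R) (h41 : M 3 0 = R)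
    (h23 : M 1 2 = R) (h32 : M 2 1 = R) :
    4 * R ≤ M.trace ∧
    (M.trace = 4 * R ↔
      M = !![R, 1, 1, R;
             1, R, R, 1;
             1, R, R, 1;
             R, 1, 1, R]) := by
  have q1 := hM.dotProduct_mulVec_nonneg ![1,0,0,-1]
  have q2 := hM.dotProduct_mulVec_nonneg ![0,1,-1,0]
  simp [dotProduct, mulVec, Fin.sum_univ_four, h14, h41] at q1
  simp [dotProduct, mulVec, Fin.sum_univ_four, h23, h32] at q2
  have htr : M.trace = M 0 0 + M 1 1 + M 2 2 + M 3 3 := by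
    simp [Matrix.trace, Fin.sum_univ_four, Matrix.diag]
  refine ⟨by linarith, ?_, ?_⟩
  · intro heq
    have z1 : M *ᵥ ![1,0,0,-1] = 0 := by
      apply (hM.dotProduct_mulVec_zero_iff _).mp
      simp [dotProduct, mulVec, Fin.sum_univ_four, h14, h41]
      linarith
    have z2 : M *ᵥ ![0,1,-1,0] = 0 := by
      apply (hM.dotProduct_mulVec_zero_iff _).mp
      simp [dotProduct, mulVec, Fin.sum_univ_four, h23, h32]
      linarith
    have c1 : ∀ i, M i 0 = M i 3 := fun i => by
      have := congrFun z1 i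
      simp [mulVec, dotProduct, Fin.sum_univ_four] at this
      linarith
    have c2 : ∀ i, M i 1 = M i 2 := fun i => by
      have := congrFun z2 i
      simp [mulVec, dotProduct, Fin.sum_univ_four] at this
      linarith
    have hs : ∀ i j : Fin 4, M j i = M i j := fun i j => by
      have := congrFun (congrFun hM.1 i) j
      simpa [conjTranspose_apply] using this
    have e00 : M 0 0 = R := by rw [c1 0, h14]
    have e33 : M 3 3 = R := by rw [← c1 3, h41]
    have e11 : M 1 1 = R := by rw [c2 1, h23]
    have e22 : M 2 2 = R := by rw [← c2 2, h32]
    have e01 : M 0 1 = 1 := by rw [c2 0, h13]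
    have e10 : M 1 0 = 1 := by rw [hs 0 1, e01]
    have e13 : M 1 3 = 1 := by rw [← c1 1, e10]
    have e31 : M 3 1 = 1 := by rw [hs 1 3, e13]
    have e23 : M 2 3 = 1 := by rw [← c1 2, h31]
    have e32 : M 3 2 = 1 := by rw [hs 2 3, e23]
    ext i j
    fin_cases i <;> fin_cases j <;>
      first
        | exact e00 | exact e01 | exact h13 | exact h14
        | exact e10 | exact e11 | exact h23 | exact e13
        | exact h31 | exact h32 | exact e22 | exact e23
        | exact h41 | exact e31 | exact e32 | exact e33
  · intro heq
    subst heq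
    simp [Matrix.trace, Fin.sum_univ_four, Matrix.diag]
    ring
end

section
/- Let D be a positive integer, let μ₁ > 0 and β > 0, set κ := β/μ₁, and let 0 < R ≤ 1/κ. Define F(x) := log x − log(1 + κx) for x > 0 and T_α(r) := (F(r) − F(α))/μ₁. Let g : ℝ^D → ℝ^D satisfy ⟨θ, g(θ)⟩ ≤ μ₁‖θ‖² + β‖θ‖³ for all θ with ‖θ‖ ≤ R. Let 0 < α ≤ r ≤ R and let θ : [0, T_α(r)] → ℝ^D be differentiable with θ'(t) = g(θ(t)) and ‖θ(0)‖ ≤ α. Then for every t ∈ [0, T_α(r)], ‖θ(t)‖ ≤ ((1 + κr)/(1 + κα))·α·e^{μ₁t}, and in particular ‖θ(t)‖ ≤ r. -/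
open Real Set Filter
open scoped Topology

set_option maxHeartbeats 1600000 in
/-- Norm-growth lemma: with `κ = β/μ₁`, `0 < R ≤ 1/κ`,
`F(x) = log x − log(1 + κx)`, `T_α(r) = (F(r) − F(α))/μ₁`, if
`⟨θ, g(θ)⟩ ≤ μ₁‖θ‖² + β‖θ‖³` for `‖θ‖ ≤ R`, `0 < α ≤ r ≤ R`, and `θ` solves `θ' = g(θ)` on
`[0, T_α(r)]` with `‖θ(0)‖ ≤ α`, then
`‖θ(t)‖ ≤ ((1+κr)/(1+κα)) α e^{μ₁ t} ≤ r` on that interval. -/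
theorem stmt14 {D : ℕ} (μ₁ β : ℝ) (hμ₁ : 0 < μ₁) (hβ : 0 < β)
    (R : ℝ) (hR0 : 0 < R) (hR : R ≤ 1 / (β / μ₁))
    (g : EuclideanSpace ℝ (Fin D) → EuclideanSpace ℝ (Fin D))
    (hg : ∀ x : EuclideanSpace ℝ (Fin D), ‖x‖ ≤ R →
      (inner ℝ x (g x) : ℝ) ≤ μ₁ * ‖x‖ ^ 2 + β * ‖x‖ ^ 3)
    (α r : ℝ) (hα : 0 < α) (hαr : α ≤ r) (hrR : r ≤ R)
    (θ : ℝ → EuclideanSpace ℝ (Fin D))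
    (hθ : ∀ t ∈ Set.Icc (0 : ℝ)
        (((Real.log r - Real.log (1 + (β / μ₁) * r)) -
          (Real.log α - Real.log (1 + (β / μ₁) * α))) / μ₁),
      HasDerivWithinAt θ (g (θ t))
        (Set.Icc (0 : ℝ)
          (((Real.log r - Real.log (1 + (β / μ₁) * r)) -
            (Real.log α - Real.log (1 + (β / μ₁) * α))) / μ₁)) t)
    (hθ0 : ‖θ 0‖ ≤ α) :
    ∀ t ∈ Set.Icc (0 : ℝ)
        (((Real.log r - Real.log (1 + (β / μ₁) * r)) -
          (Real.log α - Real.log (1 + (β / μ₁) * α))) / μ₁),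
      ‖θ t‖ ≤ ((1 + (β / μ₁) * r) / (1 + (β / μ₁) * α)) * α * Real.exp (μ₁ * t) ∧
      ‖θ t‖ ≤ r := by
  classical
  have hκ : 0 < β / μ₁ := div_pos hβ hμ₁
  set κ := β / μ₁ with hκdef
  have hβκ : β = κ * μ₁ := by rw [hκdef]; field_simp
  have hr0 : 0 < r := lt_of_lt_of_le hα hαr
  have h1α : (0:ℝ) < 1 + κ * α := by positivity
  have h1r : (0:ℝ) < 1 + κ * r := by positivity
  set T : ℝ := ((Real.log r - Real.log (1 + κ * r)) -
      (Real.log α - Real.log (1 + κ * α))) / μ₁ with hTdef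
  set A : ℝ := α / (1 + κ * α) with hAdef
  have hA : 0 < A := div_pos hα h1α
  clear_value κ T A
  have hexpT : A * Real.exp (μ₁ * T) = r / (1 + κ * r) := by
    have hμT : μ₁ * T = (Real.log r - Real.log (1 + κ * r)) -
        (Real.log α - Real.log (1 + κ * α)) := by
      rw [hTdef]; field_simp
    rw [hμT, hAdef, Real.exp_sub, Real.exp_sub, Real.exp_sub, Real.exp_log hr0,
      Real.exp_log h1r, Real.exp_log hα, Real.exp_log h1α]
    field_simp
  have hT0 : 0 ≤ T := by
    have h1 : A ≤ A * Real.exp (μ₁ * T) := by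
      rw [hexpT, hAdef, div_le_div_iff₀ h1α h1r]; nlinarith
    have h2 : (1:ℝ) ≤ Real.exp (μ₁ * T) := (le_mul_iff_one_le_right hA).mp h1
    rw [← Real.exp_zero, Real.exp_le_exp] at h2
    by_contra h
    push_neg at h
    nlinarith
  have hB0 : A / (1 - κ * A) = α := by
    rw [hAdef]
    have : 1 - κ * (α / (1 + κ * α)) = 1 / (1 + κ * α) := by field_simp; ring
    rw [this]
    field_simp
  have hpos : ∀ x : ℝ, 0 < x → x ≤ r / (1 + κ * r) →
      0 < 1 - κ * x ∧ x / (1 - κ * x) ≤ r := by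
    intro x hx hxr
    have hx1 : x * (1 + κ * r) ≤ r := (le_div_iff₀ h1r).mp hxr
    have hd : 0 < 1 - κ * x := by nlinarith
    refine ⟨hd, ?_⟩
    rw [div_le_iff₀ hd]; nlinarith
  have hur : ∀ s : ℝ, s ≤ μ₁ * T → A * Real.exp s ≤ r / (1 + κ * r) := by
    intro s hs
    calc A * Real.exp s ≤ A * Real.exp (μ₁ * T) :=
          mul_le_mul_of_nonneg_left (Real.exp_le_exp.mpr hs) hA.le
      _ = r / (1 + κ * r) := hexpT
  -- main Grönwall step with a strict supersolution
  have key : ∀ c : ℝ, 1 < c → ∀ t ∈ Set.Icc (0:ℝ) (T / c),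
      ‖θ t‖ ≤ A * Real.exp (c * μ₁ * t) / (1 - κ * (A * Real.exp (c * μ₁ * t))) := by
    intro c hc
    have hc0 : (0:ℝ) < c := by linarith
    have hTc : T / c ≤ T := div_le_self hT0 hc.le
    have hsub : Set.Icc (0:ℝ) (T/c) ⊆ Set.Icc 0 T := Set.Icc_subset_Icc le_rfl hTc
    have hse : ∀ t ∈ Set.Icc (0:ℝ) (T/c), c * μ₁ * t ≤ μ₁ * T := by
      intro t ht
      have htc := (le_div_iff₀ hc0).mp ht.2
      nlinarith [ht.1]
    have hden : ∀ t ∈ Set.Icc (0:ℝ) (T/c),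
        0 < 1 - κ * (A * Real.exp (c * μ₁ * t)) ∧
        A * Real.exp (c*μ₁*t) / (1 - κ * (A * Real.exp (c*μ₁*t))) ≤ r := fun t ht =>
      hpos _ (by positivity) (hur _ (hse t ht))
    have hθc : ContinuousOn θ (Set.Icc 0 (T/c)) := fun x hx =>
      ((hθ x (hsub hx)).continuousWithinAt).mono hsub
    intro t ht
    refine image_norm_le_of_liminf_right_slope_norm_lt_deriv_boundary (f := θ)
      (f' := fun x => if θ x = 0 then ‖g (θ x)‖ + 1 else (inner ℝ (θ x) (g (θ x)) : ℝ) / ‖θ x‖)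
      (B := fun s => A * Real.exp (c*μ₁*s) / (1 - κ * (A * Real.exp (c*μ₁*s))))
      (B' := fun s => c * μ₁ * (A * Real.exp (c*μ₁*s)) / (1 - κ * (A * Real.exp (c*μ₁*s)))^2)
      hθc ?_ ?_ ?_ ?_ ?_ ht
    · -- slope condition
      intro x hx ρ hρ
      have hxT : x < T := lt_of_lt_of_le hx.2 hTc
      have hdx : HasDerivWithinAt θ (g (θ x)) (Set.Ici x) x :=
        (hθ x (hsub (Set.Ico_subset_Icc_self hx))).mono_of_mem_nhdsWithin
          (Icc_mem_nhdsGE_of_mem ⟨hx.1, hxT⟩)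
      by_cases h0 : θ x = 0
      · simp only [if_pos h0] at hρ
        exact hdx.liminf_right_slope_norm_le (by linarith)
      · simp only [if_neg h0] at hρ
        have hnx : (0:ℝ) < ‖θ x‖ := norm_pos_iff.mpr h0
        have hn : HasDerivWithinAt (fun s => ‖θ s‖)
            ((inner ℝ (θ x) (g (θ x)) : ℝ) / ‖θ x‖) (Set.Ici x) x := by
          have hsq : HasDerivWithinAt (fun s => ‖θ s‖^2)
              (2 * (inner ℝ (θ x) (g (θ x)) : ℝ)) (Set.Ici x) x := hdx.norm_sq
          have hnz : (‖θ x‖:ℝ)^2 ≠ 0 := by positivity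
          have hs := (Real.hasDerivAt_sqrt hnz).comp_hasDerivWithinAt x hsq
          have heq : (fun s => Real.sqrt (‖θ s‖^2)) = fun s => ‖θ s‖ :=
            funext fun s => Real.sqrt_sq (norm_nonneg _)
          simp only [Function.comp_def] at hs
          rw [heq] at hs
          refine hs.congr_deriv ?_
          rw [Real.sqrt_sq (norm_nonneg _)]
          field_simp
        exact hn.liminf_right_slope_le hρ
    · -- initial condition
      calc ‖θ 0‖ ≤ α := hθ0
        _ = A * Real.exp (c*μ₁*0) / (1 - κ * (A * Real.exp (c*μ₁*0))) := by
          rw [mul_zero, Real.exp_zero, mul_one, hB0]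
    · -- continuity of B
      apply ContinuousOn.div
      · fun_prop
      · fun_prop
      · exact fun x hx => (hden x hx).1.ne'
    · -- derivative of B
      intro x hx
      have hu : HasDerivAt (fun s => A * Real.exp (c*μ₁*s))
          (c * μ₁ * (A * Real.exp (c*μ₁*x))) x := by
        have h1 : HasDerivAt (fun s : ℝ => c*μ₁*s) (c*μ₁) x := by
          simpa using (hasDerivAt_id x).const_mul (c*μ₁)
        have h3 := (h1.exp).const_mul A
        exact h3.congr_deriv (by ring)
      have hd : HasDerivAt (fun s => 1 - κ * (A * Real.exp (c*μ₁*s)))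
          (-(κ * (c * μ₁ * (A * Real.exp (c*μ₁*x))))) x := by
        simpa using (hu.const_mul κ).const_sub 1
      have hne : (1 - κ*(A*Real.exp (c*μ₁*x))) ≠ 0 :=
        (hden x (Set.Ico_subset_Icc_self hx)).1.ne'
      refine HasDerivAt.hasDerivWithinAt ?_
      refine (hu.div hd hne).congr_deriv ?_
      field_simp
      ring
    · -- strict inequality at contact points
      intro x hx heq
      obtain ⟨hd0, hbr⟩ := hden x (Set.Ico_subset_Icc_self hx)
      have hu0 : 0 < A * Real.exp (c*μ₁*x) := by positivity
      have hb0 : 0 < ‖θ x‖ := by rw [heq]; positivity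
      have hθx0 : θ x ≠ 0 := norm_pos_iff.mp hb0
      simp only [if_neg hθx0]
      have hgb := hg (θ x) (by rw [heq]; exact hbr.trans hrR)
      have h1 : (inner ℝ (θ x) (g (θ x)) : ℝ) / ‖θ x‖ ≤ μ₁ * ‖θ x‖ + β * ‖θ x‖^2 := by
        rw [div_le_iff₀ hb0]; nlinarith
      refine lt_of_le_of_lt h1 ?_
      rw [heq, hβκ]
      have hlhs : μ₁ * (A * Real.exp (c*μ₁*x) / (1 - κ * (A * Real.exp (c*μ₁*x)))) +
          κ * μ₁ * (A * Real.exp (c*μ₁*x) / (1 - κ * (A * Real.exp (c*μ₁*x))))^2 =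
          μ₁ * (A * Real.exp (c*μ₁*x)) / (1 - κ * (A * Real.exp (c*μ₁*x)))^2 := by
        field_simp
        ring
      rw [hlhs, div_lt_div_iff₀ (by positivity) (by positivity)]
      nlinarith [mul_pos (mul_pos hμ₁ hu0) (pow_pos hd0 2)]
  -- pass to the limit c → 1⁺ on [0, T)
  have keyIco : ∀ t ∈ Set.Ico (0:ℝ) T,
      ‖θ t‖ ≤ A * Real.exp (μ₁*t) / (1 - κ*(A*Real.exp (μ₁*t))) := by
    intro t ht
    have hev : ∀ᶠ c in 𝓝[>] (1:ℝ),
        ‖θ t‖ ≤ A * Real.exp (c*μ₁*t) / (1 - κ*(A*Real.exp (c*μ₁*t))) := by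
      rcases eq_or_lt_of_le ht.1 with h0 | h0
      · refine eventually_of_mem self_mem_nhdsWithin fun c hc => key c hc t ⟨ht.1, ?_⟩
        rw [← h0]
        have : (0:ℝ) < c := lt_trans one_pos hc
        positivity
      · have h1T : 1 < T / t := (one_lt_div h0).mpr ht.2
        filter_upwards [Ioc_mem_nhdsGT_of_mem ⟨le_rfl, h1T⟩] with c hc
        refine key c hc.1 t ⟨ht.1, ?_⟩
        rw [le_div_iff₀ (by linarith [hc.1] : (0:ℝ) < c)]
        calc t * c ≤ t * (T/t) := mul_le_mul_of_nonneg_left hc.2 ht.1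
          _ = T := by field_simp
    have hden1 : 0 < 1 - κ*(A*Real.exp (μ₁*t)) :=
      (hpos _ (by positivity) (hur _ (by nlinarith [ht.2.le] : μ₁ * t ≤ μ₁ * T))).1
    have htend : Tendsto (fun c : ℝ => A * Real.exp (c*μ₁*t) / (1 - κ*(A*Real.exp (c*μ₁*t))))
        (𝓝[>] (1:ℝ)) (𝓝 (A * Real.exp (μ₁*t) / (1 - κ*(A*Real.exp (μ₁*t))))) := by
      have hcont : ContinuousAt
          (fun c : ℝ => A * Real.exp (c*μ₁*t) / (1 - κ*(A*Real.exp (c*μ₁*t)))) 1 := by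
        apply ContinuousAt.div
        · fun_prop
        · fun_prop
        · simpa using hden1.ne'
      have h5 : Tendsto (fun c : ℝ => A * Real.exp (c*μ₁*t) / (1 - κ*(A*Real.exp (c*μ₁*t))))
          (𝓝[>] (1:ℝ)) (𝓝 (A * Real.exp (1*μ₁*t) / (1 - κ*(A*Real.exp (1*μ₁*t))))) :=
        hcont.tendsto.mono_left nhdsWithin_le_nhds
      simpa using h5
    exact ge_of_tendsto htend hev
  -- extend to the closed interval
  have key2 : ∀ t ∈ Set.Icc (0:ℝ) T,
      ‖θ t‖ ≤ A * Real.exp (μ₁*t) / (1 - κ*(A*Real.exp (μ₁*t))) := by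
    intro t ht
    rcases lt_or_eq_of_le ht.2 with hlt | hTt
    · exact keyIco t ⟨ht.1, hlt⟩
    · rw [hTt]
      rcases eq_or_lt_of_le hT0 with hT0' | hT0'
      · rw [← hT0']
        calc ‖θ 0‖ ≤ α := hθ0
          _ = A * Real.exp (μ₁*0) / (1 - κ*(A*Real.exp (μ₁*0))) := by
            rw [mul_zero, Real.exp_zero, mul_one, hB0]
      · have hden1 : 0 < 1 - κ*(A*Real.exp (μ₁*T)) :=
          (hpos _ (by positivity) (hur _ le_rfl)).1
        have h1 : Tendsto (fun s => ‖θ s‖) (𝓝[<] T) (𝓝 ‖θ T‖) := by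
          have hcθ : ContinuousWithinAt θ (Set.Icc 0 T) T :=
            (hθ T (Set.right_mem_Icc.mpr hT0)).continuousWithinAt
          have h2 : Tendsto (fun s => ‖θ s‖) (𝓝[Set.Icc 0 T] T) (𝓝 ‖θ T‖) :=
            (continuous_norm.tendsto _).comp hcθ
          refine h2.mono_left ?_
          rw [← nhdsWithin_Ico_eq_nhdsLT hT0']
          exact nhdsWithin_mono _ Set.Ico_subset_Icc_self
        have h2 : Tendsto (fun s => A * Real.exp (μ₁*s) / (1 - κ*(A*Real.exp (μ₁*s))))
            (𝓝[<] T) (𝓝 (A * Real.exp (μ₁*T) / (1 - κ*(A*Real.exp (μ₁*T))))) := by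
          have hcont : ContinuousAt
              (fun s : ℝ => A * Real.exp (μ₁*s) / (1 - κ*(A*Real.exp (μ₁*s)))) T :=
            ContinuousAt.div (by fun_prop) (by fun_prop) hden1.ne'
          exact hcont.tendsto.mono_left nhdsWithin_le_nhds
        have h3 : ∀ᶠ s in 𝓝[<] T,
            ‖θ s‖ ≤ A * Real.exp (μ₁*s) / (1 - κ*(A*Real.exp (μ₁*s))) := by
          rw [← nhdsWithin_Ico_eq_nhdsLT hT0']
          exact eventually_of_mem self_mem_nhdsWithin fun s hs => keyIco s hs
        exact le_of_tendsto_of_tendsto h1 h2 h3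
  -- conclude
  intro t ht
  have hb := key2 t ht
  have hu0 : 0 < A * Real.exp (μ₁*t) := by positivity
  have huR : A * Real.exp (μ₁*t) ≤ r / (1 + κ * r) :=
    hur _ (by nlinarith [ht.1, ht.2] : μ₁ * t ≤ μ₁ * T)
  obtain ⟨hd0, hbr⟩ := hpos _ hu0 huR
  constructor
  · refine hb.trans ?_
    have hC : ((1 + κ*r)/(1 + κ*α)) * α * Real.exp (μ₁*t) =
        (1 + κ*r) * (A * Real.exp (μ₁*t)) := by
      rw [hAdef]; field_simp
    rw [hC, div_le_iff₀ hd0]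
    have hx1 : (A * Real.exp (μ₁*t)) * (1 + κ * r) ≤ r := (le_div_iff₀ h1r).mp huR
    nlinarith [mul_nonneg hκ.le hu0.le]
  · exact hb.trans hbr
end

section
/- Let D be a positive integer, let μ₁ > 0 and β > 0, set κ := β/μ₁, and let 0 < R ≤ 1/κ. Define F(x) := log x − log(1 + κx) and T_α(r) := (F(r) − F(α))/μ₁. Let g : ℝ^D → ℝ^D be C¹-smooth with g(0) = 0 and Jacobian J, and suppose ‖J(θ) − J(θ + h)‖ ≤ β‖h‖ (operator norm) whenever ‖θ‖ ≤ R and ‖θ + h‖ ≤ R, and that ⟨h, J(0)h⟩ ≤ μ₁‖h‖² for all h ∈ ℝ^D. Let 0 < α ≤ r ≤ R and let θ, θ̂ : [0, T_α(r)] → ℝ^D be differentiable with θ' = g∘θ, θ̂' = g∘θ̂, and max{‖θ(0)‖, ‖θ̂(0)‖} ≤ α. Then for every t ∈ [0, T_α(r)], ‖θ(t) − θ̂(t)‖ ≤ e^{μ₁t + κr}·‖θ(0) − θ̂(0)‖. -/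
open Real
open Set

/-- One-sided Lipschitz bound from the Jacobian hypotheses. -/
lemma stmt16_onesided {D : ℕ} (μ₁ β R : ℝ)
    (g : EuclideanSpace ℝ (Fin D) → EuclideanSpace ℝ (Fin D))
    (hg : ContDiff ℝ 1 g)
    (hJlip : ∀ x h : EuclideanSpace ℝ (Fin D), ‖x‖ ≤ R → ‖x + h‖ ≤ R →
      ‖fderiv ℝ g x - fderiv ℝ g (x + h)‖ ≤ β * ‖h‖)
    (hJ0 : ∀ h : EuclideanSpace ℝ (Fin D), (inner ℝ h (fderiv ℝ g 0 h) : ℝ) ≤ μ₁ * ‖h‖ ^ 2)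
    (hR0 : 0 ≤ R) (hβ : 0 ≤ β)
    {x y : EuclideanSpace ℝ (Fin D)} {R' : ℝ} (hx : ‖x‖ ≤ R') (hy : ‖y‖ ≤ R')
    (hR' : R' ≤ R) :
    (inner ℝ (x - y) (g x - g y) : ℝ) ≤ (μ₁ + β * R') * ‖x - y‖ ^ 2 := by
  set h := x - y with hh
  have hgdiff : Differentiable ℝ g := hg.differentiable one_ne_zero
  -- the path s ↦ y + s • h
  set ψ : ℝ → EuclideanSpace ℝ (Fin D) := fun s => y + s • h with hψ
  have hψd : ∀ s : ℝ, HasDerivAt ψ h s := by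
    intro s
    simpa [hψ] using ((hasDerivAt_id s).smul_const h).const_add y
  have hψnorm : ∀ s ∈ Icc (0:ℝ) 1, ‖ψ s‖ ≤ R' := by
    intro s hs
    have : ψ s = (1 - s) • y + s • x := by
      simp only [hψ, hh]; module
    rw [this]
    calc ‖(1 - s) • y + s • x‖ ≤ ‖(1-s) • y‖ + ‖s • x‖ := norm_add_le _ _
    _ = (1 - s) * ‖y‖ + s * ‖x‖ := by
        rw [norm_smul, norm_smul, Real.norm_of_nonneg (by linarith [hs.2]),
          Real.norm_of_nonneg hs.1]
    _ ≤ (1 - s) * R' + s * R' := by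
        have h0 : (0:ℝ) ≤ 1 - s := by linarith [hs.2]
        have := hs.1
        gcongr
    _ = R' := by ring
  -- φ s = ⟪h, g (ψ s)⟫
  set φ : ℝ → ℝ := fun s => (inner ℝ h (g (ψ s)) : ℝ) with hφ
  set φ' : ℝ → ℝ := fun s => (inner ℝ h ((fderiv ℝ g (ψ s)) h) : ℝ) with hφ'
  have hφd : ∀ s : ℝ, HasDerivAt φ (φ' s) s := by
    intro s
    have h1 : HasDerivAt (fun s => g (ψ s)) ((fderiv ℝ g (ψ s)) h) s :=
      (hgdiff (ψ s)).hasFDerivAt.comp_hasDerivAt s (hψd s)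
    have h2 := (hasDerivAt_const s h).inner ℝ h1
    simpa [hφ, hφ'] using h2
  -- pointwise derivative bound
  have hbound : ∀ s ∈ Icc (0:ℝ) 1, φ' s ≤ (μ₁ + β * R') * ‖h‖ ^ 2 := by
    intro s hs
    have hz : ‖ψ s‖ ≤ R' := hψnorm s hs
    have hzR : ‖ψ s‖ ≤ R := hz.trans hR'
    have hlip := hJlip 0 (ψ s) (by simpa using hR0) (by simpa using hzR)
    rw [zero_add] at hlip
    have key : (inner ℝ h ((fderiv ℝ g (ψ s)) h) : ℝ)
        ≤ (inner ℝ h ((fderiv ℝ g 0) h) : ℝ) + ‖fderiv ℝ g 0 - fderiv ℝ g (ψ s)‖ * ‖h‖ * ‖h‖ := by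
      have : (inner ℝ h ((fderiv ℝ g (ψ s)) h) : ℝ)
          = (inner ℝ h ((fderiv ℝ g 0) h) : ℝ)
            - (inner ℝ h (((fderiv ℝ g 0 - fderiv ℝ g (ψ s))) h) : ℝ) := by
        simp [inner_sub_right, ContinuousLinearMap.sub_apply]
      rw [this]
      have h1 : |(inner ℝ h (((fderiv ℝ g 0 - fderiv ℝ g (ψ s))) h) : ℝ)|
          ≤ ‖fderiv ℝ g 0 - fderiv ℝ g (ψ s)‖ * ‖h‖ * ‖h‖ := by
        calc |(inner ℝ h (((fderiv ℝ g 0 - fderiv ℝ g (ψ s))) h) : ℝ)|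
            ≤ ‖h‖ * ‖(fderiv ℝ g 0 - fderiv ℝ g (ψ s)) h‖ := abs_real_inner_le_norm _ _
        _ ≤ ‖h‖ * (‖fderiv ℝ g 0 - fderiv ℝ g (ψ s)‖ * ‖h‖) := by
            gcongr; exact (fderiv ℝ g 0 - fderiv ℝ g (ψ s)).le_opNorm h
        _ = ‖fderiv ℝ g 0 - fderiv ℝ g (ψ s)‖ * ‖h‖ * ‖h‖ := by ring
      linarith [neg_abs_le ((inner ℝ h (((fderiv ℝ g 0 - fderiv ℝ g (ψ s))) h) : ℝ))]
    have h2 : ‖fderiv ℝ g 0 - fderiv ℝ g (ψ s)‖ * ‖h‖ * ‖h‖ ≤ β * R' * ‖h‖ ^ 2 := by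
      have hhn : (0:ℝ) ≤ ‖h‖ := norm_nonneg _
      have : ‖fderiv ℝ g 0 - fderiv ℝ g (ψ s)‖ ≤ β * R' :=
        hlip.trans (by gcongr)
      nlinarith [this, norm_nonneg (fderiv ℝ g 0 - fderiv ℝ g (ψ s))]
    have h3 := hJ0 h
    calc φ' s ≤ (inner ℝ h ((fderiv ℝ g 0) h) : ℝ)
        + ‖fderiv ℝ g 0 - fderiv ℝ g (ψ s)‖ * ‖h‖ * ‖h‖ := key
    _ ≤ μ₁ * ‖h‖ ^ 2 + β * R' * ‖h‖ ^ 2 := by linarith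
    _ = (μ₁ + β * R') * ‖h‖ ^ 2 := by ring
  -- fencing: φ 1 ≤ φ 0 + C
  set C : ℝ := (μ₁ + β * R') * ‖h‖ ^ 2 with hC
  have fence : φ 1 ≤ φ 0 + C * 1 := by
    have := image_le_of_deriv_right_le_deriv_boundary
      (f := φ) (f' := φ') (a := 0) (b := 1)
      (fun s _ => (hφd s).continuousAt.continuousWithinAt)
      (fun s _ => (hφd s).hasDerivWithinAt)
      (B := fun s => φ 0 + C * s) (B' := fun _ => C)
      (by simp)
      (fun s _ => (Continuous.continuousWithinAt (continuous_const.add (continuous_const.mul continuous_id))))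
      (fun s _ => by simpa using ((((hasDerivAt_id s).const_mul C).const_add (φ 0)).hasDerivWithinAt (s := Ici s)))
      (fun s hs => hbound s (Ico_subset_Icc_self hs))
    simpa using this (right_mem_Icc.2 (by norm_num))
  have e1 : ψ 1 = x := by simp [hψ, hh]
  have e0 : ψ 0 = y := by simp [hψ]
  have : (inner ℝ h (g x - g y) : ℝ) = φ 1 - φ 0 := by
    simp [hφ, e1, e0, inner_sub_right]
  rw [hh] at this ⊢
  linarith [fence, this.ge, this.le]


noncomputable def s16rho (μ₁ κ α t : ℝ) : ℝ :=
  α / (1 + κ * α) * Real.exp (μ₁ * t) / (1 - κ * (α / (1 + κ * α) * Real.exp (μ₁ * t)))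

section rho
variable {μ₁ κ α r t s : ℝ}

lemma s16_c_pos (hκ : 0 < κ) (hα : 0 < α) : 0 < α / (1 + κ * α) := by positivity

lemma s16_e_pos (hκ : 0 < κ) (hα : 0 < α) : 0 < α / (1 + κ * α) * Real.exp (μ₁ * t) := by
  positivity

lemma s16_denom_pos (hκ : 0 < κ) (hα : 0 < α) (hr : 0 < r)
    (hu : α / (1 + κ * α) * Real.exp (μ₁ * t) * (1 + κ * r) ≤ r) :
    1 / (1 + κ * r) ≤ 1 - κ * (α / (1 + κ * α) * Real.exp (μ₁ * t)) := by
  set e := α / (1 + κ * α) * Real.exp (μ₁ * t) with he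
  have hepos : 0 < e := s16_e_pos hκ hα
  have h1 : (0:ℝ) < 1 + κ * r := by positivity
  rw [div_le_iff₀ h1]
  nlinarith

lemma s16rho_pos (hκ : 0 < κ) (hα : 0 < α) (hr : 0 < r)
    (hu : α / (1 + κ * α) * Real.exp (μ₁ * t) * (1 + κ * r) ≤ r) :
    0 < s16rho μ₁ κ α t := by
  have hd := s16_denom_pos hκ hα hr hu
  have h1 : (0:ℝ) < 1 + κ * r := by positivity
  have : (0:ℝ) < 1 / (1 + κ * r) := by positivity
  exact div_pos (s16_e_pos hκ hα) (by linarith)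

lemma s16rho_zero (hκ : 0 < κ) (hα : 0 < α) : s16rho μ₁ κ α 0 = α := by
  have h1 : (0:ℝ) < 1 + κ * α := by positivity
  rw [s16rho]
  rw [mul_zero, Real.exp_zero, mul_one]
  rw [div_eq_iff]
  · field_simp; ring
  · intro hcon
    have : 1 - κ * (α / (1 + κ * α)) = (1 : ℝ) / (1 + κ * α) := by field_simp; ring
    rw [this] at hcon
    have : (0:ℝ) < 1 / (1 + κ * α) := by positivity
    linarith

lemma s16rho_ge (hμ₁ : 0 < μ₁) (hκ : 0 < κ) (hα : 0 < α) (hr : 0 < r) (ht : 0 ≤ t)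
    (hu : α / (1 + κ * α) * Real.exp (μ₁ * t) * (1 + κ * r) ≤ r) :
    α ≤ s16rho μ₁ κ α t := by
  have hd := s16_denom_pos hκ hα hr hu
  have h1 : (0:ℝ) < 1 + κ * r := by positivity
  have hdpos : 0 < 1 - κ * (α / (1 + κ * α) * Real.exp (μ₁ * t)) :=
    lt_of_lt_of_le (by positivity) hd
  rw [s16rho, le_div_iff₀ hdpos]
  set e := α / (1 + κ * α) * Real.exp (μ₁ * t) with he
  have key : e * (1 + κ * α) = α * Real.exp (μ₁ * t) := by
    rw [he]; field_simp
  have hexp : (1:ℝ) ≤ Real.exp (μ₁ * t) := Real.one_le_exp (by positivity)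
  nlinarith

lemma s16rho_le (hκ : 0 < κ) (hα : 0 < α) (hr : 0 < r)
    (hu : α / (1 + κ * α) * Real.exp (μ₁ * t) * (1 + κ * r) ≤ r) :
    s16rho μ₁ κ α t ≤ r := by
  have hd := s16_denom_pos hκ hα hr hu
  have h1 : (0:ℝ) < 1 + κ * r := by positivity
  have hdpos : 0 < 1 - κ * (α / (1 + κ * α) * Real.exp (μ₁ * t)) :=
    lt_of_lt_of_le (by positivity) hd
  rw [s16rho, div_le_iff₀ hdpos]
  set e := α / (1 + κ * α) * Real.exp (μ₁ * t) with he
  nlinarith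

lemma s16rho_le_exp (hκ : 0 < κ) (hα : 0 < α) (hr : 0 < r)
    (hu : α / (1 + κ * α) * Real.exp (μ₁ * t) * (1 + κ * r) ≤ r) :
    s16rho μ₁ κ α t ≤ α * Real.exp (μ₁ * t) * (1 + κ * r) := by
  have hd := s16_denom_pos hκ hα hr hu
  have h1 : (0:ℝ) < 1 + κ * r := by positivity
  have hdpos : 0 < 1 - κ * (α / (1 + κ * α) * Real.exp (μ₁ * t)) :=
    lt_of_lt_of_le (by positivity) hd
  rw [s16rho, div_le_iff₀ hdpos]
  set e := α / (1 + κ * α) * Real.exp (μ₁ * t) with he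
  have hepos : 0 < e := s16_e_pos hκ hα
  have h2 : e ≤ α * Real.exp (μ₁ * t) := by
    rw [he]
    have hα1 : (0:ℝ) < 1 + κ * α := by positivity
    rw [div_mul_eq_mul_div, div_le_iff₀ hα1]
    nlinarith [mul_pos hα (Real.exp_pos (μ₁ * t)), mul_pos hκ hα]
  have h3 : e * (1 + κ * r) ≤ r := hu
  -- goal : α * exp * (1+κr) ≥ e * (something)
  -- e ≤ α exp (1+κr) * (1 - κ e) ⇐ (1+κr)(1-κe) ≥ 1 and e ≤ α exp ... careful
  have h4 : (1:ℝ) ≤ (1 + κ * r) * (1 - κ * e) := by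
    nlinarith
  nlinarith [mul_le_mul_of_nonneg_right h2 (le_of_lt (lt_of_lt_of_le zero_lt_one h4))]

lemma s16rho_mono (hμ₁ : 0 < μ₁) (hκ : 0 < κ) (hα : 0 < α) (hr : 0 < r) (hst : s ≤ t)
    (hu : α / (1 + κ * α) * Real.exp (μ₁ * t) * (1 + κ * r) ≤ r) :
    s16rho μ₁ κ α s ≤ s16rho μ₁ κ α t := by
  set c := α / (1 + κ * α) with hc
  have hcpos : 0 < c := s16_c_pos hκ hα
  have hest : c * Real.exp (μ₁ * s) ≤ c * Real.exp (μ₁ * t) := by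
    have := Real.exp_le_exp.2 (mul_le_mul_of_nonneg_left hst (le_of_lt hμ₁))
    nlinarith
  have hus : c * Real.exp (μ₁ * s) * (1 + κ * r) ≤ r := by
    have h1 : (0:ℝ) < 1 + κ * r := by positivity
    nlinarith
  have hdt := s16_denom_pos hκ hα hr hu
  have hds := s16_denom_pos hκ hα hr hus
  have h1 : (0:ℝ) < 1 + κ * r := by positivity
  have h1' : (0:ℝ) < 1 / (1 + κ * r) := by positivity
  have hdtpos : 0 < 1 - κ * (c * Real.exp (μ₁ * t)) := lt_of_lt_of_le h1' hdt
  have hdspos : 0 < 1 - κ * (c * Real.exp (μ₁ * s)) := lt_of_lt_of_le h1' hds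
  rw [s16rho, s16rho, div_le_div_iff₀ hdspos hdtpos]
  nlinarith [s16_e_pos (μ₁ := μ₁) (t := s) hκ hα]

lemma s16rho_strict_mono (hμ₁ : 0 < μ₁) (hκ : 0 < κ) (hα : 0 < α) (hr : 0 < r) (hst : s < t)
    (hu : α / (1 + κ * α) * Real.exp (μ₁ * t) * (1 + κ * r) ≤ r) :
    s16rho μ₁ κ α s < s16rho μ₁ κ α t := by
  set c := α / (1 + κ * α) with hc
  have hcpos : 0 < c := s16_c_pos hκ hα
  have hest : c * Real.exp (μ₁ * s) < c * Real.exp (μ₁ * t) := by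
    have := Real.exp_lt_exp.2 (mul_lt_mul_of_pos_left hst hμ₁)
    nlinarith
  have hus : c * Real.exp (μ₁ * s) * (1 + κ * r) ≤ r := by
    have h1 : (0:ℝ) < 1 + κ * r := by positivity
    nlinarith
  have hdt := s16_denom_pos hκ hα hr hu
  have hds := s16_denom_pos hκ hα hr hus
  have h1' : (0:ℝ) < 1 / (1 + κ * r) := by positivity
  have hdtpos : 0 < 1 - κ * (c * Real.exp (μ₁ * t)) := lt_of_lt_of_le h1' hdt
  have hdspos : 0 < 1 - κ * (c * Real.exp (μ₁ * s)) := lt_of_lt_of_le h1' hds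
  rw [s16rho, s16rho, div_lt_div_iff₀ hdspos hdtpos]
  nlinarith [s16_e_pos (μ₁ := μ₁) (t := s) hκ hα]

lemma s16rho_eq_r (hκ : 0 < κ) (hα : 0 < α) (hr : 0 < r)
    (hu : α / (1 + κ * α) * Real.exp (μ₁ * t) * (1 + κ * r) = r) :
    s16rho μ₁ κ α t = r := by
  have hd := s16_denom_pos hκ hα hr (le_of_eq hu)
  have h1' : (0:ℝ) < 1 / (1 + κ * r) := by positivity
  have hdpos : 0 < 1 - κ * (α / (1 + κ * α) * Real.exp (μ₁ * t)) := lt_of_lt_of_le h1' hd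
  rw [s16rho, div_eq_iff (ne_of_gt hdpos)]
  set e := α / (1 + κ * α) * Real.exp (μ₁ * t) with he
  nlinarith

lemma s16rho_hasDerivAt (hμ₁ : 0 < μ₁) (hκ : 0 < κ) (hα : 0 < α) (hr : 0 < r)
    (hu : α / (1 + κ * α) * Real.exp (μ₁ * t) * (1 + κ * r) ≤ r) :
    HasDerivAt (s16rho μ₁ κ α)
      ((μ₁ + μ₁ * κ * s16rho μ₁ κ α t) * s16rho μ₁ κ α t) t := by
  set c := α / (1 + κ * α) with hc
  have hcpos : 0 < c := s16_c_pos hκ hα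
  have hd := s16_denom_pos hκ hα hr hu
  have h1' : (0:ℝ) < 1 / (1 + κ * r) := by positivity
  have hdpos : 0 < 1 - κ * (c * Real.exp (μ₁ * t)) := lt_of_lt_of_le h1' hd
  have hnum : ∀ u : ℝ, HasDerivAt (fun u => c * Real.exp (μ₁ * u))
      (c * (Real.exp (μ₁ * u) * μ₁)) u := by
    intro u
    have h2 : HasDerivAt (fun u : ℝ => μ₁ * u) μ₁ u := by
      simpa using (hasDerivAt_id u).const_mul μ₁
    exact ((Real.hasDerivAt_exp (μ₁ * u)).comp u h2).const_mul c
  have hden : HasDerivAt (fun u => 1 - κ * (c * Real.exp (μ₁ * u)))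
      (-(κ * (c * (Real.exp (μ₁ * t) * μ₁)))) t := by
    simpa using (((hnum t).const_mul κ).const_sub 1)
  have hdiv := (hnum t).div hden (ne_of_gt hdpos)
  have heq : (c * (Real.exp (μ₁ * t) * μ₁) * (1 - κ * (c * Real.exp (μ₁ * t))) -
        c * Real.exp (μ₁ * t) * -(κ * (c * (Real.exp (μ₁ * t) * μ₁)))) /
        (1 - κ * (c * Real.exp (μ₁ * t))) ^ 2
      = (μ₁ + μ₁ * κ * s16rho μ₁ κ α t) * s16rho μ₁ κ α t := by
    rw [s16rho, ← hc]
    have hne : 1 - κ * (c * Real.exp (μ₁ * t)) ≠ 0 := hdpos.ne'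
    generalize 1 - κ * (c * Real.exp (μ₁ * t)) = d at hne ⊢
    field_simp
    ring
  have hfun : s16rho μ₁ κ α =
      fun u => c * Real.exp (μ₁ * u) / (1 - κ * (c * Real.exp (μ₁ * u))) := by
    funext u; rw [s16rho, ← hc]
  rw [hfun] at heq ⊢
  rw [← heq]
  exact hdiv

end rho

section confine
variable {D : ℕ}
set_option maxHeartbeats 1000000 in

lemma stmt16_confine (μ₁ β R : ℝ) (hμ₁ : 0 < μ₁) (hβ : 0 < β) (hR0 : 0 < R)
    (g : EuclideanSpace ℝ (Fin D) → EuclideanSpace ℝ (Fin D))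
    (hg : ContDiff ℝ 1 g) (hg0 : g 0 = 0)
    (hJlip : ∀ x h : EuclideanSpace ℝ (Fin D), ‖x‖ ≤ R → ‖x + h‖ ≤ R →
      ‖fderiv ℝ g x - fderiv ℝ g (x + h)‖ ≤ β * ‖h‖)
    (hJ0 : ∀ h : EuclideanSpace ℝ (Fin D), (inner ℝ h (fderiv ℝ g 0 h) : ℝ) ≤ μ₁ * ‖h‖ ^ 2)
    (α r T : ℝ) (hα : 0 < α) (hαr : α ≤ r) (hrR : r ≤ R)
    (huT : α / (1 + (β/μ₁) * α) * Real.exp (μ₁ * T) * (1 + (β/μ₁) * r) = r)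
    (θ : ℝ → EuclideanSpace ℝ (Fin D))
    (hθ : ∀ t ∈ Icc (0:ℝ) T, HasDerivWithinAt θ (g (θ t)) (Icc (0:ℝ) T) t)
    (hθ0 : ‖θ 0‖ ≤ α) :
    ∀ t ∈ Icc (0:ℝ) T, ‖θ t‖ ≤ s16rho μ₁ (β/μ₁) α t := by
  have hκ : 0 < β / μ₁ := div_pos hβ hμ₁
  set κ := β / μ₁ with hκdef
  clear_value κ
  have hβκ : β = μ₁ * κ := by rw [hκdef]; field_simp
  have hr0 : 0 < r := lt_of_lt_of_le hα hαr
  set ρ : ℝ → ℝ := s16rho μ₁ κ α with hρdef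
  clear_value ρ
  have hu : ∀ t ≤ T, α / (1 + κ * α) * Real.exp (μ₁ * t) * (1 + κ * r) ≤ r := by
    intro t ht
    have hexp : Real.exp (μ₁ * t) ≤ Real.exp (μ₁ * T) :=
      Real.exp_le_exp.2 (mul_le_mul_of_nonneg_left ht hμ₁.le)
    have hc : 0 < α / (1 + κ * α) := s16_c_pos hκ hα
    have h1 : (0:ℝ) < 1 + κ * r := by positivity
    calc α / (1 + κ * α) * Real.exp (μ₁ * t) * (1 + κ * r)
        ≤ α / (1 + κ * α) * Real.exp (μ₁ * T) * (1 + κ * r) := by gcongr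
    _ = r := huT
  have contθ : ContinuousOn θ (Icc 0 T) := fun x hx => (hθ x hx).continuousWithinAt
  have hL : 0 < 4 * μ₁ * R + 6 * β * R ^ 2 := by positivity
  set L : ℝ := 4 * μ₁ * R + 6 * β * R ^ 2 with hLdef
  clear_value L
  have hCc : 0 < L / α + 1 := by positivity
  set Cc : ℝ := L / α + 1 with hCcdef
  clear_value Cc
  -- main estimate for points strictly inside the interval
  have key : ∀ b ∈ Ico (0:ℝ) T, ‖θ b‖ ≤ ρ b := by
    intro b hb
    obtain ⟨hb0, hbT⟩ := hb
    have hbIcc : b ∈ Icc (0:ℝ) T := ⟨hb0, hbT.le⟩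
    have hρT : ρ T = r := hρdef ▸ s16rho_eq_r hκ hα hr0 huT
    have hρb_lt : ρ b < r := by
      rw [← hρT, hρdef]
      exact s16rho_strict_mono hμ₁ hκ hα hr0 hbT (le_of_eq huT)
    have hρb_pos : 0 < ρ b := hρdef ▸ s16rho_pos hκ hα hr0 (hu b hbT.le)
    have hρbR : ρ b < R := lt_of_lt_of_le hρb_lt hrR
    have hε₀ : 0 < (R ^ 2 - ρ b ^ 2) / Real.exp (Cc * b) := by
      apply div_pos _ (Real.exp_pos _)
      have := pow_lt_pow_left₀ hρbR hρb_pos.le (two_ne_zero)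
      linarith
    set ε₀ : ℝ := (R ^ 2 - ρ b ^ 2) / Real.exp (Cc * b) with hε₀def
    clear_value ε₀
    have main : ∀ ε : ℝ, 0 < ε → ε ≤ ε₀ →
        ‖θ b‖ ^ 2 ≤ ρ b ^ 2 + ε * Real.exp (Cc * b) := by
      intro ε hε hεε₀
      set f : ℝ → ℝ := fun t => ‖θ t‖ ^ 2 with hfdef
      clear_value f
      set f' : ℝ → ℝ := fun t => 2 * (inner ℝ (θ t) (g (θ t)) : ℝ) with hf'def
      clear_value f'
      set B : ℝ → ℝ := fun t => ρ t ^ 2 + ε * Real.exp (Cc * t) with hBdef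
      clear_value B
      set B' : ℝ → ℝ := fun t =>
        2 * (μ₁ + β * ρ t) * ρ t ^ 2 + ε * (Cc * Real.exp (Cc * t)) with hB'def
      clear_value B'
      have hρd : ∀ x ∈ Icc (0:ℝ) b, HasDerivAt ρ ((μ₁ + β * ρ x) * ρ x) x := by
        intro x hx
        have h0 := s16rho_hasDerivAt hμ₁ hκ hα hr0 (hu x (hx.2.trans hbT.le))
        have heq : (μ₁ + μ₁ * κ * s16rho μ₁ κ α x) * s16rho μ₁ κ α x
            = (μ₁ + β * ρ x) * ρ x := by rw [hρdef, hβκ]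
        rw [heq] at h0
        rw [← hρdef] at h0
        exact h0
      have hfc : ContinuousOn f (Icc 0 b) := by
        rw [hfdef]
        exact ((contθ.mono (Icc_subset_Icc le_rfl hbT.le)).norm).pow 2
      have hfd : ∀ x ∈ Ico (0:ℝ) b, HasDerivWithinAt f (f' x) (Ici x) x := by
        intro x hx
        have hxT : x ∈ Icc (0:ℝ) T := ⟨hx.1, (hx.2.trans hbT).le⟩
        have hd := (hθ x hxT).mono_of_mem_nhdsWithin
          (Icc_mem_nhdsGE_of_mem (⟨hx.1, hx.2.trans hbT⟩ : x ∈ Ico (0:ℝ) T))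
        have h2 := hd.inner ℝ hd
        have heq : (inner ℝ (θ x) (g (θ x)) : ℝ) + (inner ℝ (g (θ x)) (θ x) : ℝ) = f' x := by
          simp only [hf'def]
          rw [real_inner_comm (g (θ x)) (θ x)]; ring
        rw [heq] at h2
        have hfun : (fun t => (inner ℝ (θ t) (θ t) : ℝ)) = f := by
          funext t; rw [hfdef, real_inner_self_eq_norm_sq]
        rwa [hfun] at h2
      have hBc : ContinuousOn B (Icc 0 b) := by
        intro x hx
        rw [hBdef]
        apply ContinuousWithinAt.add
        · exact ((hρd x hx).continuousAt.continuousWithinAt).pow 2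
        · exact (Continuous.continuousWithinAt (by fun_prop))
      have hBd : ∀ x ∈ Ico (0:ℝ) b, HasDerivWithinAt B (B' x) (Ici x) x := by
        intro x hx
        have h1 := ((hρd x (Ico_subset_Icc_self hx)).pow 2)
        have h2 : HasDerivAt (fun t => ε * Real.exp (Cc * t))
            (ε * (Real.exp (Cc * x) * Cc)) x := by
          have h3 : HasDerivAt (fun t : ℝ => Cc * t) Cc x := by
            simpa using (hasDerivAt_id x).const_mul Cc
          exact ((Real.hasDerivAt_exp (Cc * x)).comp x h3).const_mul ε
        have h4 := ((h1.add h2).hasDerivWithinAt (s := Ici x))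
        have hB4 : (ρ ^ 2 + fun t => ε * Real.exp (Cc * t)) = B := by rw [hBdef]; rfl
        rw [hB4] at h4
        refine h4.congr_deriv ?_
        simp only [hB'def]; push_cast; ring
      have ha : f 0 ≤ B 0 := by
        have hz : ρ 0 = α := hρdef ▸ s16rho_zero hκ hα
        simp only [hfdef, hBdef, mul_zero, Real.exp_zero, mul_one, hz]
        have := pow_le_pow_left₀ (norm_nonneg (θ 0)) hθ0 2
        linarith
      have bound : ∀ x ∈ Ico (0:ℝ) b, f x = B x → f' x < B' x := by
        intro x hx heq
        simp only [hfdef, hBdef] at heq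
        have hxT : x ∈ Icc (0:ℝ) T := ⟨hx.1, (hx.2.trans hbT).le⟩
        have hn0 : (0:ℝ) ≤ ‖θ x‖ := norm_nonneg _
        set n : ℝ := ‖θ x‖ with hndef
        have hρx_pos : 0 < ρ x := hρdef ▸ s16rho_pos hκ hα hr0 (hu x hxT.2)
        have hρxα : α ≤ ρ x := hρdef ▸ s16rho_ge hμ₁ hκ hα hr0 hx.1 (hu x hxT.2)
        have hρxb : ρ x ≤ ρ b := by
          rw [hρdef]; exact s16rho_mono hμ₁ hκ hα hr0 hx.2.le (hu b hbT.le)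
        have hE : 0 < ε * Real.exp (Cc * x) := by positivity
        set E : ℝ := ε * Real.exp (Cc * x) with hEdef
        have hn2 : n ^ 2 = ρ x ^ 2 + E := heq
        have hEbound : E ≤ R ^ 2 - ρ b ^ 2 := by
          have h5 : Real.exp (Cc * x) ≤ Real.exp (Cc * b) :=
            Real.exp_le_exp.2 (mul_le_mul_of_nonneg_left hx.2.le hCc.le)
          have h6 : E ≤ ε₀ * Real.exp (Cc * b) := by
            rw [hEdef]
            exact mul_le_mul hεε₀ h5 (Real.exp_pos _).le (hε.le.trans hεε₀)
          rw [hε₀def] at h6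
          rwa [div_mul_cancel₀] at h6
          exact (Real.exp_pos _).ne'
        clear_value n E
        have hρx2 : ρ x ^ 2 ≤ ρ b ^ 2 := pow_le_pow_left₀ hρx_pos.le hρxb 2
        have hnR : n ≤ R :=
          le_of_pow_le_pow_left₀ two_ne_zero hR0.le (by linarith)
        have hρxR : ρ x ≤ R := le_trans hρxb hρbR.le
        have hnρ : ρ x < n := lt_of_pow_lt_pow_left₀ 2 hn0 (by linarith)
        -- one-sided bound on the inner product
        have hone := stmt16_onesided μ₁ β R g hg hJlip hJ0 hR0.le hβ.le
          (x := θ x) (y := 0) (R' := n) (le_of_eq hndef.symm)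
          (by rw [norm_zero]; exact hn0) hnR
        rw [hg0, sub_zero, sub_zero, ← hndef] at hone
        have hf'le : f' x ≤ 2 * (μ₁ + β * n) * n ^ 2 := by
          simp only [hf'def]
          linarith [hone]
        have hstep : 2 * (μ₁ + β * n) * n ^ 2 < B' x := by
          simp only [hB'def]
          have h10 : ε * (Cc * Real.exp (Cc * x)) = Cc * E := by rw [hEdef]; ring
          rw [h10]
          have d1 : 0 ≤ n - ρ x := by linarith
          have d2 : n + ρ x ≤ 2 * R := by linarith
          have d3 : n ^ 2 + n * ρ x + ρ x ^ 2 ≤ 3 * R ^ 2 := by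
            linarith [pow_le_pow_left₀ hn0 hnR 2, pow_le_pow_left₀ hρx_pos.le hρxR 2,
              mul_le_mul hnR hρxR hρx_pos.le hR0.le]
          have e1 : (n - ρ x) * (n + ρ x) ≤ (n - ρ x) * (2 * R) :=
            mul_le_mul_of_nonneg_left d2 d1
          have e2 : (n - ρ x) * (n ^ 2 + n * ρ x + ρ x ^ 2) ≤ (n - ρ x) * (3 * R ^ 2) :=
            mul_le_mul_of_nonneg_left d3 d1
          have h8 : 2 * μ₁ * (n ^ 2 - ρ x ^ 2) + 2 * β * (n ^ 3 - ρ x ^ 3)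
              ≤ L * (n - ρ x) := by
            rw [hLdef]
            have E1 := mul_le_mul_of_nonneg_left e1 (by positivity : (0:ℝ) ≤ 2 * μ₁)
            have E2 := mul_le_mul_of_nonneg_left e2 (by positivity : (0:ℝ) ≤ 2 * β)
            have id1 : 2 * μ₁ * (n ^ 2 - ρ x ^ 2)
                = 2 * μ₁ * ((n - ρ x) * (n + ρ x)) := by ring
            have id2 : 2 * β * (n ^ 3 - ρ x ^ 3)
                = 2 * β * ((n - ρ x) * (n ^ 2 + n * ρ x + ρ x ^ 2)) := by ring
            have id3 : (4 * μ₁ * R + 6 * β * R ^ 2) * (n - ρ x)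
                = 2 * μ₁ * ((n - ρ x) * (2 * R)) + 2 * β * ((n - ρ x) * (3 * R ^ 2)) := by
              ring
            rw [id1, id2, id3]
            linarith [E1, E2]
          have h7 : α * (n - ρ x) ≤ E := by
            have ha1 := mul_le_mul_of_nonneg_right
              (show α ≤ n + ρ x by linarith) d1
            have ha2 : (n + ρ x) * (n - ρ x) = n ^ 2 - ρ x ^ 2 := by ring
            linarith [ha1, ha2.le, ha2.ge]
          have h9 : L * (n - ρ x) ≤ (L / α) * E := by
            rw [div_mul_eq_mul_div, le_div_iff₀ hα]
            calc L * (n - ρ x) * α = L * (α * (n - ρ x)) := by ring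
            _ ≤ L * E := mul_le_mul_of_nonneg_left h7 hL.le
          have hexpand : 2 * (μ₁ + β * n) * n ^ 2 - 2 * (μ₁ + β * ρ x) * ρ x ^ 2
              = 2 * μ₁ * (n ^ 2 - ρ x ^ 2) + 2 * β * (n ^ 3 - ρ x ^ 3) := by ring
          have hCcE : L / α * E < Cc * E := by
            rw [hCcdef]
            have hid : (L / α + 1) * E = L / α * E + E := by ring
            linarith [hid.le, hid.ge]
          linarith
        linarith
      have fence := image_le_of_deriv_right_lt_deriv_boundary' hfc hfd ha hBc hBd bound
        (right_mem_Icc.2 hb0)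
      have : f b = ‖θ b‖ ^ 2 := by rw [hfdef]
      rw [this, hBdef] at fence
      exact fence
    -- let ε → 0
    have hsq : ‖θ b‖ ^ 2 ≤ ρ b ^ 2 := by
      by_contra hcon
      push_neg at hcon
      have hη : 0 < (‖θ b‖ ^ 2 - ρ b ^ 2) / 2 := by linarith
      set η : ℝ := (‖θ b‖ ^ 2 - ρ b ^ 2) / 2 with hηdef
      have hε : 0 < min ε₀ (η / Real.exp (Cc * b)) :=
        lt_min hε₀ (div_pos hη (Real.exp_pos _))
      set ε : ℝ := min ε₀ (η / Real.exp (Cc * b)) with hεdef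
      clear_value ε
      have h1 := main ε hε (hεdef ▸ min_le_left _ _)
      have h2 : ε * Real.exp (Cc * b) ≤ η := by
        have h3 : ε ≤ η / Real.exp (Cc * b) := hεdef ▸ min_le_right _ _
        rw [← div_mul_cancel₀ η (Real.exp_pos (Cc * b)).ne']
        exact mul_le_mul_of_nonneg_right h3 (Real.exp_pos _).le
      rw [hηdef] at h2
      linarith
    exact le_of_pow_le_pow_left₀ two_ne_zero hρb_pos.le hsq
  -- extend to the closed interval
  intro t ht
  rcases eq_or_lt_of_le ht.2 with htT | htT
  · rcases eq_or_lt_of_le (ht.1.trans ht.2) with hT0 | hT0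
    · have ht0 : t = 0 := le_antisymm (htT ▸ hT0 ▸ le_rfl) ht.1
      rw [ht0, hρdef, s16rho_zero hκ hα]
      exact hθ0
    · subst htT
      have hcθ : ContinuousWithinAt (fun s => ρ s - ‖θ s‖) (Ico 0 t) t := by
        apply ContinuousWithinAt.sub
        · rw [hρdef]
          exact ((s16rho_hasDerivAt hμ₁ hκ hα hr0
            (hu t le_rfl)).continuousAt.continuousWithinAt)
        · exact (((hθ t ht).continuousWithinAt.mono Ico_subset_Icc_self).norm)
      have hne : (nhdsWithin t (Ico (0:ℝ) t)).NeBot := by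
        apply mem_closure_iff_nhdsWithin_neBot.mp
        rw [closure_Ico (ne_of_lt hT0)]
        exact ⟨hT0.le, le_rfl⟩
      have hev : ∀ᶠ s in nhdsWithin t (Ico (0:ℝ) t), 0 ≤ ρ s - ‖θ s‖ :=
        Filter.eventually_of_mem self_mem_nhdsWithin
          (fun s hs => sub_nonneg.2 (key s hs))
      have h9 := ge_of_tendsto hcθ hev
      exact sub_nonneg.1 h9
  · exact key t ⟨ht.1, htT⟩

end confine

set_option maxHeartbeats 1000000 in
/-- Trajectory coupling lemma: with `κ = β/μ₁`, `0 < R ≤ 1/κ`,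
`F(x) = log x − log(1 + κx)`, `T_α(r) = (F(r) − F(α))/μ₁`, if `g` is `C¹`, `g(0) = 0`, the
Jacobian is `β`-Lipschitz on the ball of radius `R`, and `⟨h, J(0)h⟩ ≤ μ₁‖h‖²`, then any two
solutions `θ, θ̂` of `θ' = g(θ)` on `[0, T_α(r)]` starting within distance `α` of the origin
satisfy `‖θ(t) − θ̂(t)‖ ≤ e^{μ₁ t + κ r} ‖θ(0) − θ̂(0)‖`. -/
theorem stmt16 {D : ℕ} (μ₁ β : ℝ) (hμ₁ : 0 < μ₁) (hβ : 0 < β)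
    (R : ℝ) (hR0 : 0 < R) (hR : R ≤ 1 / (β / μ₁))
    (g : EuclideanSpace ℝ (Fin D) → EuclideanSpace ℝ (Fin D))
    (hg : ContDiff ℝ 1 g) (hg0 : g 0 = 0)
    (hJlip : ∀ x h : EuclideanSpace ℝ (Fin D), ‖x‖ ≤ R → ‖x + h‖ ≤ R →
      ‖fderiv ℝ g x - fderiv ℝ g (x + h)‖ ≤ β * ‖h‖)
    (hJ0 : ∀ h : EuclideanSpace ℝ (Fin D), (inner ℝ h (fderiv ℝ g 0 h) : ℝ) ≤ μ₁ * ‖h‖ ^ 2)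
    (α r : ℝ) (hα : 0 < α) (hαr : α ≤ r) (hrR : r ≤ R)
    (θ θhat : ℝ → EuclideanSpace ℝ (Fin D))
    (hθ : ∀ t ∈ Set.Icc (0 : ℝ)
        (((Real.log r - Real.log (1 + (β / μ₁) * r)) -
          (Real.log α - Real.log (1 + (β / μ₁) * α))) / μ₁),
      HasDerivWithinAt θ (g (θ t))
        (Set.Icc (0 : ℝ)
          (((Real.log r - Real.log (1 + (β / μ₁) * r)) -
            (Real.log α - Real.log (1 + (β / μ₁) * α))) / μ₁)) t)
    (hθhat : ∀ t ∈ Set.Icc (0 : ℝ)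
        (((Real.log r - Real.log (1 + (β / μ₁) * r)) -
          (Real.log α - Real.log (1 + (β / μ₁) * α))) / μ₁),
      HasDerivWithinAt θhat (g (θhat t))
        (Set.Icc (0 : ℝ)
          (((Real.log r - Real.log (1 + (β / μ₁) * r)) -
            (Real.log α - Real.log (1 + (β / μ₁) * α))) / μ₁)) t)
    (hθ0 : ‖θ 0‖ ≤ α) (hθhat0 : ‖θhat 0‖ ≤ α) :
    ∀ t ∈ Set.Icc (0 : ℝ)
        (((Real.log r - Real.log (1 + (β / μ₁) * r)) -
          (Real.log α - Real.log (1 + (β / μ₁) * α))) / μ₁),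
      ‖θ t - θhat t‖ ≤ Real.exp (μ₁ * t + (β / μ₁) * r) * ‖θ 0 - θhat 0‖ := by
  have hκ : 0 < β / μ₁ := div_pos hβ hμ₁
  set κ := β / μ₁ with hκdef
  clear_value κ
  have hr0 : 0 < r := lt_of_lt_of_le hα hαr
  have h1r : (0:ℝ) < 1 + κ * r := by positivity
  have h1a : (0:ℝ) < 1 + κ * α := by positivity
  set T : ℝ := ((Real.log r - Real.log (1 + κ * r)) -
      (Real.log α - Real.log (1 + κ * α))) / μ₁ with hTdef
  have hμT : μ₁ * T = (Real.log r + Real.log (1 + κ * α)) -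
      (Real.log (1 + κ * r) + Real.log α) := by
    rw [hTdef]; field_simp; ring
  clear_value T
  have huT : α / (1 + κ * α) * Real.exp (μ₁ * T) * (1 + κ * r) = r := by
    rw [hμT, Real.exp_sub, Real.exp_add, Real.exp_add, Real.exp_log hr0,
      Real.exp_log h1r, Real.exp_log h1a, Real.exp_log hα]
    field_simp
  set ρ : ℝ → ℝ := s16rho μ₁ κ α with hρdef
  clear_value ρ
  have hu : ∀ t ≤ T, α / (1 + κ * α) * Real.exp (μ₁ * t) * (1 + κ * r) ≤ r := by
    intro t ht
    have hexp : Real.exp (μ₁ * t) ≤ Real.exp (μ₁ * T) :=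
      Real.exp_le_exp.2 (mul_le_mul_of_nonneg_left ht hμ₁.le)
    have hc : 0 < α / (1 + κ * α) := s16_c_pos hκ hα
    calc α / (1 + κ * α) * Real.exp (μ₁ * t) * (1 + κ * r)
        ≤ α / (1 + κ * α) * Real.exp (μ₁ * T) * (1 + κ * r) := by gcongr
    _ = r := huT
  have hβκ : β = μ₁ * κ := by rw [hκdef]; field_simp
  -- confinement of both trajectories
  have huT' : α / (1 + β / μ₁ * α) * Real.exp (μ₁ * T) * (1 + β / μ₁ * r) = r := by
    rw [← hκdef]; exact huT
  have hconf : ∀ t ∈ Set.Icc (0:ℝ) T, ‖θ t‖ ≤ ρ t := by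
    rw [hρdef, hκdef]
    exact stmt16_confine μ₁ β R hμ₁ hβ hR0 g hg hg0 hJlip hJ0 α r T hα hαr hrR
      huT' θ hθ hθ0
  have hconfh : ∀ t ∈ Set.Icc (0:ℝ) T, ‖θhat t‖ ≤ ρ t := by
    rw [hρdef, hκdef]
    exact stmt16_confine μ₁ β R hμ₁ hβ hR0 g hg hg0 hJlip hJ0 α r T hα hαr hrR
      huT' θhat hθhat hθhat0
  have hρd : ∀ x ∈ Set.Icc (0:ℝ) T, HasDerivAt ρ ((μ₁ + β * ρ x) * ρ x) x := by
    intro x hx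
    have h0 := s16rho_hasDerivAt hμ₁ hκ hα hr0 (hu x hx.2)
    have heq : (μ₁ + μ₁ * κ * s16rho μ₁ κ α x) * s16rho μ₁ κ α x
        = (μ₁ + β * ρ x) * ρ x := by rw [hρdef, hβκ]
    rw [heq] at h0
    rw [← hρdef] at h0
    exact h0
  have hρ_pos : ∀ x ∈ Set.Icc (0:ℝ) T, 0 < ρ x := by
    intro x hx; rw [hρdef]; exact s16rho_pos hκ hα hr0 (hu x hx.2)
  have hρ_le_r : ∀ x ∈ Set.Icc (0:ℝ) T, ρ x ≤ r := by
    intro x hx; rw [hρdef]; exact s16rho_le hκ hα hr0 (hu x hx.2)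
  have hρ0 : ρ 0 = α := by rw [hρdef]; exact s16rho_zero hκ hα
  have hδ0 : (0:ℝ) ≤ ‖θ 0 - θhat 0‖ := norm_nonneg _
  set δ0 : ℝ := ‖θ 0 - θhat 0‖ with hδ0def
  -- the fencing estimate, for every ε > 0
  have hmain : ∀ ε : ℝ, 0 < ε → ∀ t ∈ Set.Icc (0:ℝ) T,
      ‖θ t - θhat t‖ ^ 2 ≤ (δ0 ^ 2 + ε) / α ^ 2 * ρ t ^ 2 * Real.exp (ε * t) := by
    intro ε hε
    set f : ℝ → ℝ := fun s => ‖θ s - θhat s‖ ^ 2 with hfdef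
    clear_value f
    set f' : ℝ → ℝ :=
      fun s => 2 * (inner ℝ (θ s - θhat s) (g (θ s) - g (θhat s)) : ℝ) with hf'def
    clear_value f'
    set B : ℝ → ℝ :=
      fun s => (δ0 ^ 2 + ε) / α ^ 2 * ρ s ^ 2 * Real.exp (ε * s) with hBdef
    clear_value B
    set B' : ℝ → ℝ := fun s => (δ0 ^ 2 + ε) / α ^ 2 *
      (2 * ρ s * ((μ₁ + β * ρ s) * ρ s) * Real.exp (ε * s)
        + ρ s ^ 2 * (Real.exp (ε * s) * ε)) with hB'def
    clear_value B'
    have contθ : ContinuousOn θ (Set.Icc 0 T) := fun x hx => (hθ x hx).continuousWithinAt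
    have contθh : ContinuousOn θhat (Set.Icc 0 T) :=
      fun x hx => (hθhat x hx).continuousWithinAt
    have hfc : ContinuousOn f (Set.Icc 0 T) := by
      rw [hfdef]
      exact ((contθ.sub contθh).norm).pow 2
    have hfd : ∀ x ∈ Set.Ico (0:ℝ) T, HasDerivWithinAt f (f' x) (Set.Ici x) x := by
      intro x hx
      have hxT : x ∈ Set.Icc (0:ℝ) T := ⟨hx.1, hx.2.le⟩
      have hmem : Set.Icc (0:ℝ) T ∈ nhdsWithin x (Set.Ici x) :=
        Icc_mem_nhdsGE_of_mem (⟨hx.1, hx.2⟩ : x ∈ Set.Ico (0:ℝ) T)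
      have hd := (((hθ x hxT).sub (hθhat x hxT)).mono_of_mem_nhdsWithin hmem)
      have h2 := hd.inner ℝ hd
      have heq : (inner ℝ (θ x - θhat x) (g (θ x) - g (θhat x)) : ℝ)
          + (inner ℝ (g (θ x) - g (θhat x)) (θ x - θhat x) : ℝ) = f' x := by
        simp only [hf'def]
        rw [real_inner_comm (g (θ x) - g (θhat x)) (θ x - θhat x)]; ring
      simp only [Pi.sub_apply] at h2
      rw [heq] at h2
      have hfun : (fun t => (inner ℝ (θ t - θhat t) (θ t - θhat t) : ℝ)) = f := by
        funext t; rw [hfdef, real_inner_self_eq_norm_sq]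
      rwa [hfun] at h2
    have hBc : ContinuousOn B (Set.Icc 0 T) := by
      intro x hx
      rw [hBdef]
      apply ContinuousWithinAt.mul
      · exact (continuousWithinAt_const.mul
          (((hρd x hx).continuousAt.continuousWithinAt).pow 2))
      · exact (Continuous.continuousWithinAt (by fun_prop))
    have hBd : ∀ x ∈ Set.Ico (0:ℝ) T, HasDerivWithinAt B (B' x) (Set.Ici x) x := by
      intro x hx
      have h1 := (hρd x ⟨hx.1, hx.2.le⟩).pow 2
      have h2 : HasDerivAt (fun s => Real.exp (ε * s)) (Real.exp (ε * x) * ε) x := by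
        have h3 : HasDerivAt (fun s : ℝ => ε * s) ε x := by
          simpa using (hasDerivAt_id x).const_mul ε
        exact (Real.hasDerivAt_exp (ε * x)).comp x h3
      have h4 := ((h1.mul h2).const_mul ((δ0 ^ 2 + ε) / α ^ 2)).hasDerivWithinAt
        (s := Set.Ici x)
      have hfun : (fun y => (δ0 ^ 2 + ε) / α ^ 2 * (ρ y ^ 2 * Real.exp (ε * y))) = B := by
        funext y; rw [hBdef]; ring
      simp only [Pi.mul_apply, Pi.pow_apply] at h4
      rw [hfun] at h4
      refine h4.congr_deriv ?_
      simp only [hB'def]; push_cast; ring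
    have ha : f 0 ≤ B 0 := by
      have hB0 : B 0 = δ0 ^ 2 + ε := by
        simp only [hBdef]
        rw [hρ0, mul_zero, Real.exp_zero]
        field_simp
      have hf0 : f 0 = δ0 ^ 2 := by
        simp only [hfdef, hδ0def]
      rw [hB0, hf0]
      linarith
    have bound : ∀ x ∈ Set.Ico (0:ℝ) T, f x = B x → f' x < B' x := by
      intro x hx heq
      have hxT : x ∈ Set.Icc (0:ℝ) T := ⟨hx.1, hx.2.le⟩
      have hρx_pos : 0 < ρ x := hρ_pos x hxT
      have hρxR : ρ x ≤ R := (hρ_le_r x hxT).trans hrR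
      have hone := stmt16_onesided μ₁ β R g hg hJlip hJ0 hR0.le hβ.le
        (x := θ x) (y := θhat x) (R' := ρ x) (hconf x hxT) (hconfh x hxT) hρxR
      have hBpos : 0 < B x := by
        rw [hBdef]
        positivity
      have hf'le : f' x ≤ 2 * (μ₁ + β * ρ x) * B x := by
        have hfB : ‖θ x - θhat x‖ ^ 2 = B x := by rw [← heq, hfdef]
        simp only [hf'def]
        rw [← hfB]
        linarith [hone]
      have hlt : 2 * (μ₁ + β * ρ x) * B x < B' x := by
        have hBx : B x = (δ0 ^ 2 + ε) / α ^ 2 * ρ x ^ 2 * Real.exp (ε * x) := by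
          rw [hBdef]
        have hpos : 0 < (δ0 ^ 2 + ε) / α ^ 2 * (ρ x ^ 2 * (Real.exp (ε * x) * ε)) := by
          positivity
        simp only [hB'def]
        rw [hBx]
        have hid : (δ0 ^ 2 + ε) / α ^ 2 *
            (2 * ρ x * ((μ₁ + β * ρ x) * ρ x) * Real.exp (ε * x)
              + ρ x ^ 2 * (Real.exp (ε * x) * ε))
            = 2 * (μ₁ + β * ρ x) * ((δ0 ^ 2 + ε) / α ^ 2 * ρ x ^ 2 * Real.exp (ε * x))
              + (δ0 ^ 2 + ε) / α ^ 2 * (ρ x ^ 2 * (Real.exp (ε * x) * ε)) := by ring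
        linarith [hid.le, hid.ge, hpos]
      linarith
    intro t ht
    have fence := image_le_of_deriv_right_lt_deriv_boundary' hfc hfd ha hBc hBd bound ht
    have hfB : f t = ‖θ t - θhat t‖ ^ 2 := by rw [hfdef]
    rw [hfB, hBdef] at fence
    exact fence
  -- pass to the limit ε → 0⁺ and conclude
  intro t ht
  have hsq : ‖θ t - θhat t‖ ^ 2 ≤ δ0 ^ 2 / α ^ 2 * ρ t ^ 2 := by
    have hcont : Filter.Tendsto
        (fun ε : ℝ => (δ0 ^ 2 + ε) / α ^ 2 * ρ t ^ 2 * Real.exp (ε * t))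
        (nhdsWithin 0 (Set.Ioi (0:ℝ)))
        (nhds ((δ0 ^ 2 + 0) / α ^ 2 * ρ t ^ 2 * Real.exp (0 * t))) := by
      apply Filter.Tendsto.mono_left _ nhdsWithin_le_nhds
      apply Continuous.tendsto
      fun_prop
    have hev : ∀ᶠ ε in nhdsWithin 0 (Set.Ioi (0:ℝ)),
        ‖θ t - θhat t‖ ^ 2 ≤ (δ0 ^ 2 + ε) / α ^ 2 * ρ t ^ 2 * Real.exp (ε * t) :=
      Filter.eventually_of_mem self_mem_nhdsWithin
        (fun ε hε => hmain ε hε t ht)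
    have hle := ge_of_tendsto hcont hev
    simpa using hle
  have hρtr : ρ t ≤ α * Real.exp (μ₁ * t) * (1 + κ * r) := by
    rw [hρdef]
    exact s16rho_le_exp hκ hα hr0 (hu t ht.2)
  have hρt_pos : 0 < ρ t := hρ_pos t ht
  have hδt : ‖θ t - θhat t‖ ≤ ρ t / α * δ0 := by
    have h1 : 0 ≤ ρ t / α * δ0 := by positivity
    apply le_of_pow_le_pow_left₀ two_ne_zero h1
    have hid : (ρ t / α * δ0) ^ 2 = δ0 ^ 2 / α ^ 2 * ρ t ^ 2 := by ring
    rw [hid]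
    exact hsq
  have h2 : ρ t / α * δ0 ≤ Real.exp (μ₁ * t) * (1 + κ * r) * δ0 := by
    apply mul_le_mul_of_nonneg_right _ hδ0
    rw [div_le_iff₀ hα]
    calc ρ t ≤ α * Real.exp (μ₁ * t) * (1 + κ * r) := hρtr
    _ = Real.exp (μ₁ * t) * (1 + κ * r) * α := by ring
  have h3 : Real.exp (μ₁ * t) * (1 + κ * r) * δ0
      ≤ Real.exp (μ₁ * t + κ * r) * δ0 := by
    apply mul_le_mul_of_nonneg_right _ hδ0
    rw [Real.exp_add]
    have h4 : 1 + κ * r ≤ Real.exp (κ * r) := by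
      have := Real.add_one_le_exp (κ * r)
      linarith
    exact mul_le_mul_of_nonneg_left h4 (Real.exp_pos (μ₁ * t)).le
  calc ‖θ t - θhat t‖ ≤ ρ t / α * δ0 := hδt
  _ ≤ Real.exp (μ₁ * t) * (1 + κ * r) * δ0 := h2
  _ ≤ Real.exp (μ₁ * t + κ * r) * δ0 := h3
end

section
/- Let A be a real D×D matrix and let 0 ≤ K ≤ D. Suppose û₁, …, û_K ∈ ℝ^D are linearly independent left eigenvectors of A, i.e. ûᵢᵀA = λ̂ᵢ·ûᵢᵀ for reals λ̂₁, …, λ̂_K, and ṽ₁, …, ṽ_{D−K} ∈ ℝ^D are linearly independent right eigenvectors of A, i.e. A·ṽⱼ = λ̃ⱼ·ṽⱼ for reals λ̃₁, …, λ̃_{D−K}, and suppose ⟨ûᵢ, ṽⱼ⟩ = 0 for all 1 ≤ i ≤ K and 1 ≤ j ≤ D−K. Then the characteristic polynomial of A equals ∏_{i=1}^{K}(X − λ̂ᵢ) · ∏_{j=1}^{D−K}(X − λ̃ⱼ); in particular, λ̂₁, …, λ̂_K, λ̃₁, …, λ̃_{D−K} are all the eigenvalues of A counted with multiplicity. -/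
open Matrix Polynomial

section Aux

lemma aux_sum_dotProduct {ι n : Type*} [Fintype n] (s : Finset ι) (f : ι → n → ℝ) (w : n → ℝ) :
    (∑ i ∈ s, f i) ⬝ᵥ w = ∑ i ∈ s, f i ⬝ᵥ w := by
  simp only [dotProduct, Finset.sum_apply, Finset.sum_mul]
  exact Finset.sum_comm

lemma aux_dotProduct_sum {ι n : Type*} [Fintype n] (s : Finset ι) (v : n → ℝ) (f : ι → n → ℝ) :
    v ⬝ᵥ (∑ i ∈ s, f i) = ∑ i ∈ s, v ⬝ᵥ f i := by
  simp only [dotProduct, Finset.sum_apply, Finset.mul_sum]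
  exact Finset.sum_comm

variable {m : Type*} [Fintype m] [DecidableEq m]

lemma aux_charpoly_diagonal (v : m → ℝ) :
    (Matrix.diagonal v).charpoly = ∏ i, (Polynomial.X - Polynomial.C (v i)) := by
  have h : charmatrix (Matrix.diagonal v)
      = Matrix.diagonal (fun i => Polynomial.X - Polynomial.C (v i)) := by
    ext i j
    by_cases hij : i = j
    · subst hij; simp [charmatrix_apply_eq, Matrix.diagonal_apply_eq]
    · simp [charmatrix_apply_ne _ _ _ hij, Matrix.diagonal_apply_ne _ hij]
  rw [Matrix.charpoly, h, Matrix.det_diagonal]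

/-- If `G * B = Δ * G` with `det G ≠ 0`, then `B` and `Δ` have the same charpoly. -/
lemma aux_charpoly_eq_of_semiconj {G B Δ : Matrix m m ℝ} (hG : G.det ≠ 0)
    (h : G * B = Δ * G) : B.charpoly = Δ.charpoly := by
  have hmap : G.map Polynomial.C * charmatrix B = charmatrix Δ * G.map Polynomial.C := by
    simp only [charmatrix, RingHom.mapMatrix_apply]
    rw [mul_sub, sub_mul]
    congr 1
    · rw [Matrix.scalar_apply, ← Matrix.smul_eq_diagonal_mul, ← Matrix.op_smul_eq_mul_diagonal,
        op_smul_eq_smul]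
    · rw [← Matrix.map_mul, ← Matrix.map_mul, h]
  have hdet := congrArg Matrix.det hmap
  rw [Matrix.det_mul, Matrix.det_mul] at hdet
  have hCG : (G.map (⇑Polynomial.C)).det = Polynomial.C G.det := by
    rw [← RingHom.mapMatrix_apply, ← RingHom.map_det]
  rw [Matrix.charpoly, Matrix.charpoly]
  rw [hCG] at hdet
  have hC0 : (Polynomial.C G.det : ℝ[X]) ≠ 0 := by simpa using hG
  rw [mul_comm (charmatrix Δ).det _] at hdet
  exact mul_left_cancel₀ hC0 hdet

/-- The Gram matrix of a linearly independent family has nonzero determinant. -/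
lemma aux_gram_det_ne_zero {k d : ℕ} {u : Fin k → (Fin d → ℝ)}
    (hu : LinearIndependent ℝ u) :
    (Matrix.of (fun i j => u i ⬝ᵥ u j) : Matrix (Fin k) (Fin k) ℝ).det ≠ 0 := by
  intro hdet
  obtain ⟨x, hx, hGx⟩ := (Matrix.exists_mulVec_eq_zero_iff).2 hdet
  set y : Fin d → ℝ := ∑ i, x i • u i with hy
  have hyu : ∀ i, u i ⬝ᵥ y = 0 := by
    intro i
    have h1 : u i ⬝ᵥ y = ∑ k, (u i ⬝ᵥ u k) * x k := by
      rw [hy, aux_dotProduct_sum]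
      refine Finset.sum_congr rfl fun k _ => ?_
      rw [dotProduct_smul, smul_eq_mul, mul_comm]
    have h2 := congrFun hGx i
    simp only [Matrix.mulVec, dotProduct, Matrix.of_apply, Pi.zero_apply] at h2
    rw [h1]
    exact h2
  have hyy : y ⬝ᵥ y = 0 := by
    conv_lhs => rw [hy, aux_sum_dotProduct]
    refine Finset.sum_eq_zero fun i _ => ?_
    rw [smul_dotProduct, hyu i, smul_zero]
  have hy0 : y = 0 := dotProduct_self_eq_zero.mp hyy
  exact hx (funext (Fintype.linearIndependent_iff.mp hu x hy0))

end Aux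

/-- If a real `D×D` matrix `A` has `K` linearly independent left eigenvectors
`ûᵢ` (eigenvalues `λ̂ᵢ`) and `D−K` linearly independent right eigenvectors `ṽⱼ` (eigenvalues
`λ̃ⱼ`) with `⟨ûᵢ, ṽⱼ⟩ = 0` for all `i, j`, then the characteristic polynomial of `A` equals
`∏ᵢ (X − λ̂ᵢ) · ∏ⱼ (X − λ̃ⱼ)`; in particular these are all the eigenvalues of `A` with
multiplicity. -/
theorem stmt18 {D : ℕ} (A : Matrix (Fin D) (Fin D) ℝ) (K : ℕ) (hK : K ≤ D)
    (uhat : Fin K → (Fin D → ℝ)) (lamhat : Fin K → ℝ)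
    (vtil : Fin (D - K) → (Fin D → ℝ)) (lamtil : Fin (D - K) → ℝ)
    (huind : LinearIndependent ℝ uhat)
    (hvind : LinearIndependent ℝ vtil)
    (hleft : ∀ i : Fin K, Matrix.vecMul (uhat i) A = lamhat i • uhat i)
    (hright : ∀ j : Fin (D - K), A *ᵥ vtil j = lamtil j • vtil j)
    (horth : ∀ (i : Fin K) (j : Fin (D - K)), uhat i ⬝ᵥ vtil j = 0) :
    A.charpoly =
      (∏ i : Fin K, (Polynomial.X - Polynomial.C (lamhat i))) *
        ∏ j : Fin (D - K), (Polynomial.X - Polynomial.C (lamtil j)) := by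
  rcases Nat.eq_zero_or_pos D with hD | hD
  · subst hD
    have hK0 : K = 0 := Nat.le_zero.mp hK
    subst hK0
    simp [Matrix.charpoly, Matrix.det_isEmpty]
  have hcard : Fintype.card (Fin K ⊕ Fin (D - K)) = D := by
    simp [Nat.add_sub_cancel' hK]
  haveI : Nonempty (Fin K ⊕ Fin (D - K)) := by
    rw [← Fintype.card_pos_iff, hcard]; exact hD
  set w : (Fin K ⊕ Fin (D - K)) → (Fin D → ℝ) := Sum.elim uhat vtil with hw
  -- the combined family is linearly independent
  have hwind : LinearIndependent ℝ w := by
    rw [Fintype.linearIndependent_iff]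
    intro g hg
    have hg' : (∑ i, g (Sum.inl i) • uhat i) + (∑ j, g (Sum.inr j) • vtil j) = 0 := by
      rw [Fintype.sum_sum_type] at hg
      simpa [hw] using hg
    set u : Fin D → ℝ := ∑ i, g (Sum.inl i) • uhat i with hu
    set v : Fin D → ℝ := ∑ j, g (Sum.inr j) • vtil j with hv
    have hudotv : u ⬝ᵥ v = 0 := by
      rw [hu, aux_sum_dotProduct]
      refine Finset.sum_eq_zero fun i _ => ?_
      rw [smul_dotProduct, hv, aux_dotProduct_sum]
      rw [Finset.sum_eq_zero fun j _ => by
        rw [dotProduct_smul, horth i j, smul_zero]]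
      rw [smul_zero]
    have hu0 : u = 0 := by
      have huu : u ⬝ᵥ u = 0 := by
        have hveq : v = -u := by rw [eq_neg_iff_add_eq_zero, add_comm]; exact hg'
        rw [hveq, dotProduct_neg, neg_eq_zero] at hudotv
        exact hudotv
      exact dotProduct_self_eq_zero.mp huu
    have hv0 : v = 0 := by
      have := hg'
      rw [hu0, zero_add] at this
      exact this
    have hgl : ∀ i, g (Sum.inl i) = 0 := Fintype.linearIndependent_iff.mp huind _ hu0
    have hgr : ∀ j, g (Sum.inr j) = 0 := Fintype.linearIndependent_iff.mp hvind _ hv0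
    rintro (i | j)
    · exact hgl i
    · exact hgr j
  -- build a basis
  have hcard' : Fintype.card (Fin K ⊕ Fin (D - K)) = Module.finrank ℝ (Fin D → ℝ) := by
    rw [hcard, Module.finrank_fintype_fun_eq_card, Fintype.card_fin]
  let b : Module.Basis (Fin K ⊕ Fin (D - K)) ℝ (Fin D → ℝ) :=
    basisOfLinearIndependentOfCardEqFinrank hwind hcard'
  have hb : ⇑b = w := coe_basisOfLinearIndependentOfCardEqFinrank hwind hcard'
  set M : Matrix (Fin K ⊕ Fin (D - K)) (Fin K ⊕ Fin (D - K)) ℝ :=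
    LinearMap.toMatrix b b (Matrix.toLin' A) with hM
  -- charpoly of A equals charpoly of M
  have hchar : A.charpoly = M.charpoly := by
    have h1 : A.charpoly = (Matrix.toLin' A).charpoly := by
      rw [← LinearMap.charpoly_toMatrix (Matrix.toLin' A) (Pi.basisFun ℝ (Fin D)),
        LinearMap.toMatrix_eq_toMatrix', LinearMap.toMatrix'_toLin']
    rw [h1, hM, LinearMap.charpoly_toMatrix]
  -- entries of M
  have hMapp : ∀ s t, M s t = b.repr (A *ᵥ w t) s := by
    intro s t
    rw [hM, LinearMap.toMatrix_apply, Matrix.toLin'_apply, hb]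
  -- the columns over right eigenvectors
  have hcol : ∀ (j : Fin (D - K)) (s), M s (Sum.inr j) = if s = Sum.inr j then lamtil j else 0 := by
    intro j s
    rw [hMapp]
    have hwv : A *ᵥ w (Sum.inr j) = lamtil j • b (Sum.inr j) := by
      rw [hb]
      show A *ᵥ vtil j = lamtil j • vtil j
      exact hright j
    rw [hwv, _root_.map_smul, Module.Basis.repr_self]
    rcases eq_or_ne s (Sum.inr j) with hs | hs
    · simp [hs, Finsupp.single_apply]
    · simp [hs, Finsupp.single_apply, Ne.symm hs]
  have h12 : M.toBlocks₁₂ = 0 := by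
    ext i j
    simp [Matrix.toBlocks₁₂, hcol j (Sum.inl i)]
  have h22 : M.toBlocks₂₂ = Matrix.diagonal lamtil := by
    ext j' j
    rw [Matrix.toBlocks₂₂]
    by_cases hjj : j' = j
    · subst hjj; simp [hcol j' (Sum.inr j')]
    · simp [hcol j (Sum.inr j'), hjj, Matrix.diagonal_apply_ne _ hjj]
  -- expansion of A *ᵥ uhat i in the basis
  have hexp : ∀ i : Fin K, A *ᵥ uhat i =
      (∑ k, M (Sum.inl k) (Sum.inl i) • uhat k)
        + (∑ j, M (Sum.inr j) (Sum.inl i) • vtil j) := by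
    intro i
    have hrepr := (Module.Basis.sum_repr b (A *ᵥ uhat i)).symm
    rw [Fintype.sum_sum_type] at hrepr
    have hwi : w (Sum.inl i) = uhat i := rfl
    calc A *ᵥ uhat i
        = (∑ k, b.repr (A *ᵥ uhat i) (Sum.inl k) • b (Sum.inl k))
          + ∑ j, b.repr (A *ᵥ uhat i) (Sum.inr j) • b (Sum.inr j) := hrepr
      _ = _ := by
          congr 1
          · refine Finset.sum_congr rfl fun k _ => ?_
            rw [hMapp, hwi, hb]; rfl
          · refine Finset.sum_congr rfl fun j _ => ?_
            rw [hMapp, hwi, hb]; rfl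
  -- the Gram relation for the top-left block
  set G : Matrix (Fin K) (Fin K) ℝ := Matrix.of (fun i j => uhat i ⬝ᵥ uhat j) with hG
  have hGB : G * M.toBlocks₁₁ = Matrix.diagonal lamhat * G := by
    ext i' i
    have hdot1 : uhat i' ⬝ᵥ (A *ᵥ uhat i)
        = ∑ k, M (Sum.inl k) (Sum.inl i) * (uhat i' ⬝ᵥ uhat k) := by
      rw [hexp i, dotProduct_add, aux_dotProduct_sum, aux_dotProduct_sum]
      have hz : ∑ j, uhat i' ⬝ᵥ (M (Sum.inr j) (Sum.inl i) • vtil j) = 0 :=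
        Finset.sum_eq_zero fun j _ => by
          rw [dotProduct_smul, horth i' j, smul_zero]
      rw [hz, add_zero]
      refine Finset.sum_congr rfl fun k _ => ?_
      rw [dotProduct_smul, smul_eq_mul]
    have hdot2 : uhat i' ⬝ᵥ (A *ᵥ uhat i) = lamhat i' * (uhat i' ⬝ᵥ uhat i) := by
      rw [Matrix.dotProduct_mulVec, hleft i', smul_dotProduct, smul_eq_mul]
    have hlhs : (G * M.toBlocks₁₁) i' i
        = ∑ k, (uhat i' ⬝ᵥ uhat k) * M (Sum.inl k) (Sum.inl i) := by
      simp [Matrix.mul_apply, hG, Matrix.toBlocks₁₁]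
    rw [hlhs]
    have : ∑ k, (uhat i' ⬝ᵥ uhat k) * M (Sum.inl k) (Sum.inl i)
        = lamhat i' * (uhat i' ⬝ᵥ uhat i) := by
      rw [← hdot2, hdot1]
      exact Finset.sum_congr rfl fun k _ => mul_comm _ _
    rw [this]
    simp [hG, Matrix.diagonal_mul]
  have hB : M.toBlocks₁₁.charpoly = (Matrix.diagonal lamhat).charpoly :=
    aux_charpoly_eq_of_semiconj (aux_gram_det_ne_zero huind) hGB
  rw [hchar, ← Matrix.fromBlocks_toBlocks M, h12, h22, Matrix.charpoly_fromBlocks_zero₁₂, hB,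
    aux_charpoly_diagonal, aux_charpoly_diagonal]
end

section
/- Let L : ℝ^D → ℝ be C¹-smooth, let θ̄ ∈ ℝ^D, and let c > 0, r > 0, β > 0, and μ ∈ [1/2, 1). Suppose that on the closed ball {θ : ‖θ − θ̄‖ ≤ r}: (a) L(θ) ≥ L(θ̄); (b) ∇L is β-Lipschitz (so that L(θ) − L(θ̄) ≤ (β/2)‖θ − θ̄‖² there); and (c) the Łojasiewicz inequality ‖∇L(θ)‖ ≥ c·(L(θ) − L(θ̄))^μ holds. Then there exist δ > 0 and C > 0 such that for every solution θ : [0, ∞) → ℝ^D of the gradient flow θ'(t) = −∇L(θ(t)) with ‖θ(0) − θ̄‖ ≤ δ, the limit θ_∞ := lim_{t→∞} θ(t) exists and satisfies ‖θ_∞ − θ̄‖ ≤ C·‖θ(0) − θ̄‖^{2(1−μ)}. -/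
open Filter Topology

set_option maxHeartbeats 4000000 in
/-- Łojasiewicz convergence of gradient flow near a local minimizer: if on
the ball `{‖θ − θ̄‖ ≤ r}` one has `L(θ) ≥ L(θ̄)`, the gradient of `L` is `β`-Lipschitz, and
the Łojasiewicz inequality `‖∇L(θ)‖ ≥ c (L(θ) − L(θ̄))^μ` holds with `μ ∈ [1/2, 1)`, then
there are `δ, C > 0` such that every gradient-flow trajectory starting within `δ` of `θ̄`
converges to some `θ_∞` with `‖θ_∞ − θ̄‖ ≤ C ‖θ(0) − θ̄‖^{2(1−μ)}`. -/
theorem stmt19 {D : ℕ} (L : EuclideanSpace ℝ (Fin D) → ℝ) (hL : ContDiff ℝ 1 L)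
    (θbar : EuclideanSpace ℝ (Fin D)) (c r β : ℝ) (hc : 0 < c) (hr : 0 < r) (hβ : 0 < β)
    (μ : ℝ) (hμ₁ : 1 / 2 ≤ μ) (hμ₂ : μ < 1)
    (hmin : ∀ θ : EuclideanSpace ℝ (Fin D), ‖θ - θbar‖ ≤ r → L θbar ≤ L θ)
    (hlip : ∀ θ₁ θ₂ : EuclideanSpace ℝ (Fin D), ‖θ₁ - θbar‖ ≤ r → ‖θ₂ - θbar‖ ≤ r →
      ‖gradient L θ₁ - gradient L θ₂‖ ≤ β * ‖θ₁ - θ₂‖)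
    (hloj : ∀ θ : EuclideanSpace ℝ (Fin D), ‖θ - θbar‖ ≤ r →
      c * (L θ - L θbar) ^ μ ≤ ‖gradient L θ‖) :
    ∃ δ > (0 : ℝ), ∃ C > (0 : ℝ),
      ∀ θ : ℝ → EuclideanSpace ℝ (Fin D),
        (∀ t ∈ Set.Ici (0 : ℝ),
          HasDerivWithinAt θ (-(gradient L (θ t))) (Set.Ici (0 : ℝ)) t) →
        ‖θ 0 - θbar‖ ≤ δ →
        ∃ θinf : EuclideanSpace ℝ (Fin D),
          Tendsto θ atTop (𝓝 θinf) ∧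
          ‖θinf - θbar‖ ≤ C * ‖θ 0 - θbar‖ ^ (2 * (1 - μ)) := by
  classical
  have hμ0 : (0 : ℝ) < 1 - μ := by linarith
  set e : ℝ := 2 * (1 - μ) with he_def
  have he : 0 < e := by positivity
  have he1 : e ≤ 1 := by rw [he_def]; linarith
  set K : ℝ := 1 / ((1 - μ) * c) with hK_def
  have hK : 0 < K := by positivity
  set β' : ℝ := β ^ (1 - μ) with hβ'_def
  have hβ' : 0 < β' := Real.rpow_pos_of_pos hβ _
  -- choice of δ
  set x0 : ℝ := r / (8 * K * β' + 8) with hx0_def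
  have hx0 : 0 < x0 := by positivity
  set δ : ℝ := min 1 (min (r / 8) (x0 ^ (1 / e))) with hδ_def
  have hδpos : 0 < δ := by
    apply lt_min one_pos
    exact lt_min (by positivity) (Real.rpow_pos_of_pos hx0 _)
  set C : ℝ := 1 + K * β' with hC_def
  have hCpos : 0 < C := by positivity
  refine ⟨δ, hδpos, C, hCpos, ?_⟩
  intro θ hθ hstart
  -- basic facts about L
  have hdiff : ∀ x, DifferentiableAt ℝ L x := fun x =>
    (hL.differentiable one_ne_zero).differentiableAt
  have hgradbar : gradient L θbar = 0 := by
    have hloc : IsLocalMin L θbar := by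
      filter_upwards [Metric.closedBall_mem_nhds θbar hr] with x hx
      exact hmin x (by rwa [← mem_closedBall_iff_norm])
    rw [gradient, hloc.fderiv_eq_zero, map_zero]
  have hnormgrad : ∀ x, ‖fderiv ℝ L x‖ = ‖gradient L x‖ := fun x => by
    rw [gradient, LinearIsometryEquiv.norm_map]
  -- quadratic upper bound near the minimizer
  have hquad : ∀ x : EuclideanSpace ℝ (Fin D), ‖x - θbar‖ ≤ r →
      L x - L θbar ≤ β * ‖x - θbar‖ * ‖x - θbar‖ := by
    intro x hx
    have hconv : Convex ℝ (Metric.closedBall θbar ‖x - θbar‖) := convex_closedBall _ _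
    have hb : ∀ z ∈ Metric.closedBall θbar ‖x - θbar‖,
        ‖fderiv ℝ L z‖ ≤ β * ‖x - θbar‖ := by
      intro z hz
      have hz' : ‖z - θbar‖ ≤ ‖x - θbar‖ := by rwa [← mem_closedBall_iff_norm]
      calc ‖fderiv ℝ L z‖ = ‖gradient L z - gradient L θbar‖ := by
            rw [hnormgrad, hgradbar, sub_zero]
        _ ≤ β * ‖z - θbar‖ := hlip z θbar (hz'.trans hx) (by simp [hr.le])
        _ ≤ β * ‖x - θbar‖ := mul_le_mul_of_nonneg_left hz' hβ.le
    have hmem1 : θbar ∈ Metric.closedBall θbar ‖x - θbar‖ :=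
      Metric.mem_closedBall_self (norm_nonneg _)
    have hmem2 : x ∈ Metric.closedBall θbar ‖x - θbar‖ := by
      rw [mem_closedBall_iff_norm]
    have := hconv.norm_image_sub_le_of_norm_fderiv_le
      (fun z _ => hdiff z) hb hmem1 hmem2
    calc L x - L θbar ≤ |L x - L θbar| := le_abs_self _
      _ = ‖L x - L θbar‖ := rfl
      _ ≤ β * ‖x - θbar‖ * ‖x - θbar‖ := this
  -- notation for the trajectory
  set a : ℝ := ‖θ 0 - θbar‖ with ha_def
  have ha0 : 0 ≤ a := norm_nonneg _
  have haδ : a ≤ δ := hstart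
  have ha1 : a ≤ 1 := haδ.trans (min_le_left _ _)
  have har8 : a ≤ r / 8 := haδ.trans ((min_le_right _ _).trans (min_le_left _ _))
  have har : a ≤ r := by linarith
  have hae : K * β' * a ^ e ≤ r / 8 := by
    have h1 : a ^ e ≤ (x0 ^ (1 / e)) ^ e :=
      Real.rpow_le_rpow ha0 (haδ.trans ((min_le_right _ _).trans (min_le_right _ _))) he.le
    have h2 : (x0 ^ (1 / e)) ^ e = x0 := by
      rw [← Real.rpow_mul hx0.le, one_div_mul_cancel he.ne', Real.rpow_one]
    have h3 : K * β' * a ^ e ≤ K * β' * x0 := by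
      apply mul_le_mul_of_nonneg_left _ (by positivity)
      rw [← h2]; exact h1
    refine h3.trans ?_
    have hden : (0:ℝ) < 8 * K * β' + 8 := by positivity
    rw [hx0_def, ← mul_div_assoc, div_le_div_iff₀ hden (by norm_num : (0:ℝ) < 8)]
    nlinarith [mul_nonneg (mul_nonneg hK.le hβ'.le) hr.le]
  set g : ℝ → ℝ := fun t => L (θ t) - L θbar with hg_def
  set h : ℝ → ℝ := fun t => g t ^ (1 - μ) with hh_def
  have hcont : ContinuousOn θ (Set.Ici 0) := fun t ht =>
    (hθ t ht).continuousWithinAt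
  have hgcont : ContinuousOn g (Set.Ici 0) :=
    ((hL.continuous.comp_continuousOn hcont).sub continuousOn_const)
  have hhcont : ContinuousOn h (Set.Ici 0) :=
    hgcont.rpow_const (fun x _ => Or.inr hμ0.le)
  -- derivative of g along the flow
  have hgrad : ∀ t ∈ Set.Ici (0:ℝ),
      HasDerivWithinAt g (-(‖gradient L (θ t)‖^2)) (Set.Ici 0) t := by
    intro t ht
    have h1 : HasFDerivAt L ((InnerProductSpace.toDual ℝ _) (gradient L (θ t))) (θ t) :=
      ((hdiff (θ t)).hasGradientAt).hasFDerivAt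
    have h2 := (h1.comp_hasDerivWithinAt t (hθ t ht)).sub_const (L θbar)
    have h3 : ((InnerProductSpace.toDual ℝ _) (gradient L (θ t))) (-(gradient L (θ t)))
        = -(‖gradient L (θ t)‖^2) := by
      rw [InnerProductSpace.toDual_apply_apply, inner_neg_right, real_inner_self_eq_norm_sq]
    rw [← h3]
    exact h2
  -- monotonicity of g while in the ball
  have hanti : ∀ p q : ℝ, 0 ≤ p → p ≤ q →
      (∀ u, u ∈ Set.Icc p q → ‖θ u - θbar‖ ≤ r) → g q ≤ g p := by
    intro p q hp hpq hball
    have key := image_norm_le_of_norm_deriv_right_le_deriv_boundary'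
      (f := fun _ : ℝ => (0 : EuclideanSpace ℝ (Fin D))) (f' := fun _ => 0)
      (a := p) (b := q)
      continuousOn_const (fun x _ => hasDerivWithinAt_const x _ 0)
      (B := fun u => g p - g u) (B' := fun u => ‖gradient L (θ u)‖^2)
      (by simp)
      (continuousOn_const.sub (hgcont.mono (fun u hu => hp.trans hu.1)))
      (fun x hx => by
        have h0x : (0:ℝ) ≤ x := hp.trans hx.1
        have := ((hgrad x h0x).mono (Set.Ici_subset_Ici.mpr h0x)).const_sub (g p)
        simpa using this)
      (fun x _ => by simp [sq_nonneg])
    have := key (Set.right_mem_Icc.mpr hpq)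
    simp only [norm_zero] at this
    linarith
  -- the key length estimate when g stays positive
  have lemA : ∀ s t : ℝ, 0 ≤ s → s ≤ t →
      (∀ u, u ∈ Set.Icc s t → ‖θ u - θbar‖ ≤ r) →
      (∀ u, u ∈ Set.Ico s t → 0 < g u) → ‖θ t - θ s‖ ≤ K * (h s - h t) := by
    intro s t hs hst hball hpos
    have hsub0 : Set.Icc s t ⊆ Set.Ici (0:ℝ) := fun u hu => hs.trans hu.1
    have key := image_norm_le_of_norm_deriv_right_le_deriv_boundary'
      (f := fun u => θ u - θ s) (f' := fun u => -(gradient L (θ u))) (a := s) (b := t)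
      ((hcont.mono hsub0).sub continuousOn_const)
      (fun x hx => ((hθ x (hsub0 ⟨hx.1, hx.2.le⟩)).mono
          (Set.Ici_subset_Ici.mpr (hs.trans hx.1))).sub_const _)
      (B := fun u => K * (h s - h u))
      (B' := fun u => K * (‖gradient L (θ u)‖^2 * (1 - μ) * g u ^ (1 - μ - 1)))
      (by simp)
      (continuousOn_const.mul (continuousOn_const.sub (hhcont.mono hsub0)))
      (fun x hx => by
        have h0x : (0:ℝ) ≤ x := hs.trans hx.1
        have hgx := (hgrad x h0x).mono (Set.Ici_subset_Ici.mpr h0x)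
        have hrpow := hgx.rpow_const (p := 1 - μ) (Or.inl (hpos x hx).ne')
        have hfin := (hrpow.const_sub (h s)).const_mul K
        exact hfin.congr_deriv (by ring))
      (fun x hx => by
        show ‖-(gradient L (θ x))‖ ≤ K * (‖gradient L (θ x)‖^2 * (1 - μ) * g x ^ (1 - μ - 1))
        have hbx : ‖θ x - θbar‖ ≤ r := hball x ⟨hx.1, hx.2.le⟩
        have hgx : 0 < g x := hpos x hx
        have hl : c * g x ^ μ ≤ ‖gradient L (θ x)‖ := hloj (θ x) hbx
        have hgμ : 0 < g x ^ μ := Real.rpow_pos_of_pos hgx μ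
        have hn : 0 < ‖gradient L (θ x)‖ := lt_of_lt_of_le (by positivity) hl
        rw [norm_neg]
        have hexp : g x ^ (1 - μ - 1) = (g x ^ μ)⁻¹ := by
          rw [show (1:ℝ) - μ - 1 = -μ by ring, Real.rpow_neg hgx.le]
        rw [hexp, hK_def]
        have heq : (1 / ((1 - μ) * c)) * (‖gradient L (θ x)‖^2 * (1 - μ) * (g x ^ μ)⁻¹)
            = ‖gradient L (θ x)‖^2 / (c * g x ^ μ) := by
          field_simp
        rw [heq, le_div_iff₀ (by positivity)]
        nlinarith [hl, hn.le, hgμ.le])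
    have := key (Set.right_mem_Icc.mpr hst)
    simpa using this
  -- the key length estimate in general (handling zeros of g)
  have lemE : ∀ s t : ℝ, 0 ≤ s → s ≤ t →
      (∀ u, u ∈ Set.Icc (0:ℝ) t → ‖θ u - θbar‖ ≤ r) → ‖θ t - θ s‖ ≤ K * (h s - h t) := by
    intro s t hs hst hball
    have hg0 : ∀ u, u ∈ Set.Icc (0:ℝ) t → 0 ≤ g u := fun u hu =>
      sub_nonneg.mpr (hmin _ (hball u hu))
    by_cases hZ : {v | v ∈ Set.Icc s t ∧ g v = 0}.Nonempty
    · have hZclosed : IsClosed {v | v ∈ Set.Icc s t ∧ g v = 0} := by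
        have heq : {v | v ∈ Set.Icc s t ∧ g v = 0} = Set.Icc s t ∩ g ⁻¹' {0} := by
          ext v
          exact Iff.rfl
        rw [heq]
        exact ContinuousOn.preimage_isClosed_of_isClosed
          (hgcont.mono (fun u hu => hs.trans hu.1)) isClosed_Icc isClosed_singleton
      have hbdd : BddBelow {v | v ∈ Set.Icc s t ∧ g v = 0} := ⟨s, fun v hv => hv.1.1⟩
      have hT0mem' := hZclosed.csInf_mem hZ hbdd
      set T0 := sInf {v | v ∈ Set.Icc s t ∧ g v = 0} with hT0_def
      obtain ⟨hT0mem, hgT0⟩ := hT0mem'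
      have hT00 : (0:ℝ) ≤ T0 := hs.trans hT0mem.1
      have hpos : ∀ u, u ∈ Set.Ico s T0 → 0 < g u := by
        intro u hu
        rcases (hg0 u ⟨hs.trans hu.1, hu.2.le.trans hT0mem.2⟩).lt_or_eq with hlt | heq
        · exact hlt
        · exact absurd (csInf_le hbdd ⟨⟨hu.1, hu.2.le.trans hT0mem.2⟩, heq.symm⟩)
            (not_le.mpr hu.2)
      have step1 : ‖θ T0 - θ s‖ ≤ K * (h s - h T0) :=
        lemA s T0 hs hT0mem.1
          (fun u hu => hball u ⟨hs.trans hu.1, hu.2.trans hT0mem.2⟩) hpos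
      have hhT0 : h T0 = 0 := by
        simp only [hh_def, hgT0]
        exact Real.zero_rpow hμ0.ne'
      have hzero : ∀ v, v ∈ Set.Icc T0 t → g v = 0 := by
        intro v hv
        have h1 : g v ≤ g T0 := hanti T0 v hT00 hv.1
          (fun u hu => hball u ⟨hT00.trans hu.1, hu.2.trans hv.2⟩)
        exact le_antisymm (hgT0 ▸ h1) (hg0 v ⟨hT00.trans hv.1, hv.2⟩)
      have hconst : θ t = θ T0 := by
        have hder0 : ∀ v ∈ Set.Ico T0 t, HasDerivWithinAt θ 0 (Set.Ici v) v := by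
          intro v hv
          have hv0 : (0:ℝ) ≤ v := hT00.trans hv.1
          have hgv := (hgrad v hv0).mono
            (fun u (hu : u ∈ Set.Icc v t) => hv0.trans hu.1 : Set.Icc v t ⊆ Set.Ici 0)
          have hconstg : HasDerivWithinAt (fun _ : ℝ => (0:ℝ))
              (-(‖gradient L (θ v)‖^2)) (Set.Icc v t) v :=
            hgv.congr (fun y hy => (hzero y ⟨hv.1.trans hy.1, hy.2⟩).symm)
              ((hzero v ⟨hv.1, hv.2.le⟩).symm)
          have hUD : UniqueDiffWithinAt ℝ (Set.Icc v t) v :=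
            (uniqueDiffOn_Icc hv.2) v (Set.left_mem_Icc.mpr hv.2.le)
          have e1 := hconstg.derivWithin hUD
          have e2 := (hasDerivWithinAt_const v (Set.Icc v t) (0:ℝ)).derivWithin hUD
          rw [e1] at e2
          have hg0' : gradient L (θ v) = 0 := by
            have hsq : ‖gradient L (θ v)‖^2 = 0 := by linarith
            have := pow_eq_zero_iff (n := 2) (by norm_num) |>.mp hsq
            simpa [norm_eq_zero] using this
          have hfin := (hθ v hv0).mono (Set.Ici_subset_Ici.mpr hv0)
          rw [hg0', neg_zero] at hfin
          exact hfin
        exact constant_of_has_deriv_right_zero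
          (hcont.mono (fun u (hu : u ∈ Set.Icc T0 t) => hT00.trans hu.1)) hder0 t
          (Set.right_mem_Icc.mpr hT0mem.2)
      have hht : h t = 0 := by
        simp only [hh_def, hzero t (Set.right_mem_Icc.mpr hT0mem.2)]
        exact Real.zero_rpow hμ0.ne'
      calc ‖θ t - θ s‖ = ‖θ T0 - θ s‖ := by rw [hconst]
        _ ≤ K * (h s - h T0) := step1
        _ = K * (h s - h t) := by rw [hhT0, hht]
    · have hpos : ∀ u, u ∈ Set.Ico s t → 0 < g u := by
        intro u hu
        rcases (hg0 u ⟨hs.trans hu.1, hu.2.le⟩).lt_or_eq with hlt | heq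
        · exact hlt
        · exact absurd ⟨⟨hu.1, hu.2.le⟩, heq.symm⟩ (fun hmem => hZ ⟨u, hmem⟩)
      exact lemA s t hs hst (fun u hu => hball u ⟨hs.trans hu.1, hu.2⟩) hpos
  -- bound on h 0
  have hg00 : 0 ≤ g 0 := sub_nonneg.mpr (hmin _ har)
  have hh0 : h 0 ≤ β' * a ^ e := by
    have h1 : g 0 ≤ β * a * a := hquad _ har
    have h2 : h 0 ≤ (β * a * a) ^ (1 - μ) := Real.rpow_le_rpow hg00 h1 hμ0.le
    refine h2.trans_eq ?_
    have h4 : a * a = a ^ (2:ℝ) := by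
      rw [show (2:ℝ) = ((2:ℕ):ℝ) by norm_num, Real.rpow_natCast]
      ring
    rw [show β * a * a = β * (a * a) by ring, Real.mul_rpow hβ.le (by positivity), h4,
      ← Real.rpow_mul ha0]
  have hM : a + K * h 0 ≤ r / 4 := by
    have h5 := mul_le_mul_of_nonneg_left hh0 hK.le
    have h6 : K * (β' * a ^ e) = K * β' * a ^ e := by ring
    nlinarith [hae]
  -- the trajectory stays in the ball of radius r/2
  have hhalf : ∀ t : ℝ, 0 ≤ t → ‖θ t - θbar‖ ≤ r / 2 := by
    by_contra hcon
    push_neg at hcon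
    obtain ⟨t₀, ht₀0, ht₀⟩ := hcon
    have hSne : {t : ℝ | 0 ≤ t ∧ r / 2 < ‖θ t - θbar‖}.Nonempty := ⟨t₀, ht₀0, ht₀⟩
    have hSbdd : BddBelow {t : ℝ | 0 ≤ t ∧ r / 2 < ‖θ t - θbar‖} := ⟨0, fun x hx => hx.1⟩
    set T := sInf {t : ℝ | 0 ≤ t ∧ r / 2 < ‖θ t - θbar‖} with hT_def
    have hT0 : 0 ≤ T := le_csInf hSne (fun x hx => hx.1)
    have hbelow : ∀ u, 0 ≤ u → u < T → ‖θ u - θbar‖ ≤ r / 2 := by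
      intro u hu hut
      by_contra hbad
      push_neg at hbad
      exact absurd (csInf_le hSbdd ⟨hu, hbad⟩) (not_le.mpr hut)
    have hTball : ‖θ T - θbar‖ ≤ r / 2 := by
      rcases eq_or_lt_of_le hT0 with hT0' | hT0'
      · rw [← hT0']
        calc ‖θ 0 - θbar‖ = a := rfl
          _ ≤ r / 2 := by linarith
      · have hclos : T ∈ closure (Set.Ico 0 T) := by
          rw [closure_Ico hT0'.ne]
          exact Set.right_mem_Icc.mpr hT0
        have hne : (𝓝[Set.Ico (0:ℝ) T] T).NeBot := mem_closure_iff_nhdsWithin_neBot.mp hclos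
        have htend : Tendsto θ (𝓝[Set.Ico (0:ℝ) T] T) (𝓝 (θ T)) :=
          (hcont T hT0).mono (fun u (hu : u ∈ Set.Ico (0:ℝ) T) => hu.1)
        have htend2 : Tendsto (fun u => ‖θ u - θbar‖) (𝓝[Set.Ico (0:ℝ) T] T)
            (𝓝 ‖θ T - θbar‖) := (htend.sub_const θbar).norm
        exact le_of_tendsto htend2
          (eventually_nhdsWithin_of_forall (fun u hu => hbelow u hu.1 hu.2))
    have hballT : ∀ u, u ∈ Set.Icc (0:ℝ) T → ‖θ u - θbar‖ ≤ r := by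
      intro u hu
      rcases eq_or_lt_of_le hu.2 with h' | h'
      · rw [h']
        exact hTball.trans (by linarith)
      · exact (hbelow u hu.1 h').trans (by linarith)
    have himp : ∀ u, u ∈ Set.Icc (0:ℝ) T → ‖θ u - θbar‖ ≤ r / 4 := by
      intro u hu
      have h1 := lemE 0 u le_rfl hu.1 (fun v hv => hballT v ⟨hv.1, hv.2.trans hu.2⟩)
      have hhu : 0 ≤ h u := Real.rpow_nonneg (sub_nonneg.mpr (hmin _ (hballT u hu))) _
      have htri : ‖θ u - θbar‖ ≤ ‖θ u - θ 0‖ + ‖θ 0 - θbar‖ := by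
        have : θ u - θbar = (θ u - θ 0) + (θ 0 - θbar) := by abel
        rw [this]
        exact norm_add_le _ _
      have : ‖θ 0 - θbar‖ = a := rfl
      nlinarith [hK.le]
    have hctsT := (Metric.continuousWithinAt_iff).mp (hcont T hT0) (r/8) (by positivity)
    obtain ⟨ε, hε, hball2⟩ := hctsT
    have hlow : ∀ x ∈ {t : ℝ | 0 ≤ t ∧ r / 2 < ‖θ t - θbar‖}, T + ε ≤ x := by
      intro x hx
      by_contra hxlt
      push_neg at hxlt
      have hxT : T ≤ x := csInf_le hSbdd hx
      have hdist : dist x T < ε := by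
        rw [Real.dist_eq, abs_of_nonneg (by linarith)]
        linarith
      have h1 : dist (θ x) (θ T) < r/8 := hball2 hx.1 hdist
      have h3 : ‖θ T - θbar‖ ≤ r/4 := himp T ⟨hT0, le_rfl⟩
      have h4 : ‖θ x - θ T‖ < r / 8 := by rwa [← dist_eq_norm]
      have htri : ‖θ x - θbar‖ ≤ ‖θ x - θ T‖ + ‖θ T - θbar‖ := by
        have : θ x - θbar = (θ x - θ T) + (θ T - θbar) := by abel
        rw [this]
        exact norm_add_le _ _
      have : ‖θ x - θbar‖ < r/2 := by linarith
      exact absurd hx.2 (not_lt.mpr this.le)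
    have : T + ε ≤ T := le_csInf hSne hlow
    linarith
  have hballr : ∀ u : ℝ, 0 ≤ u → ‖θ u - θbar‖ ≤ r := fun u hu =>
    (hhalf u hu).trans (by linarith)
  have est : ∀ s t : ℝ, 0 ≤ s → s ≤ t → ‖θ t - θ s‖ ≤ K * (h s - h t) :=
    fun s t hs hst => lemE s t hs hst (fun u hu => hballr u hu.1)
  have hgnn : ∀ t : ℝ, 0 ≤ t → 0 ≤ g t := fun t ht => sub_nonneg.mpr (hmin _ (hballr t ht))
  have hhnn : ∀ t : ℝ, 0 ≤ t → 0 ≤ h t := fun t ht => Real.rpow_nonneg (hgnn t ht) _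
  have hhanti : ∀ s t : ℝ, 0 ≤ s → s ≤ t → h t ≤ h s := by
    intro s t hs hst
    have h1 := est s t hs hst
    nlinarith [norm_nonneg (θ t - θ s), hK]
  set ℓ : ℝ := ⨅ n : ℕ, h n with hℓ_def
  have hbddb : BddBelow (Set.range fun n : ℕ => h n) := by
    refine ⟨0, ?_⟩
    rintro x ⟨n, rfl⟩
    exact hhnn n (Nat.cast_nonneg n)
  have hℓle : ∀ t : ℝ, 0 ≤ t → ℓ ≤ h t := by
    intro t ht
    have h1 : h (Nat.ceil t : ℕ) ≤ h t := hhanti t _ ht (Nat.le_ceil t)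
    exact (ciInf_le hbddb (Nat.ceil t)).trans h1
  have hexists : ∀ ε : ℝ, 0 < ε → ∃ N : ℕ, h N < ℓ + ε := by
    intro ε hε
    exact exists_lt_of_ciInf_lt (lt_add_of_pos_right ℓ hε)
  have hcauchy : CauchySeq (fun n : ℕ => θ n) := by
    rw [Metric.cauchySeq_iff']
    intro ε hε
    obtain ⟨N, hN⟩ := hexists (ε / (2 * K)) (by positivity)
    refine ⟨N, fun n hn => ?_⟩
    have h1 := est N n (Nat.cast_nonneg N) (Nat.cast_le.mpr hn)
    rw [dist_eq_norm]
    have h2 : ℓ ≤ h (n:ℝ) := hℓle _ (Nat.cast_nonneg n)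
    have h3 : h (N:ℝ) - h (n:ℝ) < ε / (2*K) := by linarith
    have h4 : K * (h (N:ℝ) - h (n:ℝ)) < ε := by
      calc K * (h (N:ℝ) - h (n:ℝ)) < K * (ε / (2*K)) := by
            apply mul_lt_mul_of_pos_left h3 hK
        _ = ε / 2 := by field_simp
        _ < ε := by linarith
    linarith
  obtain ⟨θinf, hθinf⟩ := cauchySeq_tendsto_of_complete hcauchy
  have htendfull : Tendsto θ atTop (𝓝 θinf) := by
    rw [Metric.tendsto_atTop]
    intro ε hε
    obtain ⟨N, hN⟩ := hexists (ε / (4 * K)) (by positivity)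
    obtain ⟨M, hM⟩ := (Metric.tendsto_atTop.mp hθinf) (ε/4) (by positivity)
    refine ⟨((max N M : ℕ) : ℝ), fun t ht => ?_⟩
    have hm0 : (0:ℝ) ≤ ((max N M : ℕ) : ℝ) := Nat.cast_nonneg _
    have h1 : ‖θ t - θ ((max N M : ℕ) : ℝ)‖ ≤ K * (h ((max N M : ℕ) : ℝ) - h t) :=
      est _ t hm0 ht
    have h2 : h ((max N M : ℕ) : ℝ) ≤ h (N:ℝ) :=
      hhanti N _ (Nat.cast_nonneg N) (Nat.cast_le.mpr (le_max_left _ _))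
    have h3 : ℓ ≤ h t := hℓle t (hm0.trans ht)
    have h4 : dist (θ ((max N M : ℕ) : ℝ)) θinf < ε/4 := hM _ (le_max_right _ _)
    have h5 : K * (h ((max N M : ℕ) : ℝ) - h t) < ε/2 := by
      have h6 : h ((max N M : ℕ) : ℝ) - h t < ε / (4*K) := by linarith
      calc K * (h ((max N M : ℕ) : ℝ) - h t) < K * (ε / (4*K)) :=
            mul_lt_mul_of_pos_left h6 hK
        _ = ε / 4 := by field_simp
        _ < ε / 2 := by linarith
    calc dist (θ t) θinf ≤ dist (θ t) (θ ((max N M : ℕ) : ℝ)) + dist (θ ((max N M : ℕ) : ℝ)) θinf :=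
          dist_triangle _ _ _
      _ < ε/2 + ε/4 := by
          rw [dist_eq_norm]
          exact add_lt_add_of_lt_of_lt (h1.trans_lt h5) h4
      _ < ε := by linarith
  refine ⟨θinf, htendfull, ?_⟩
  have hbound : ∀ t : ℝ, 0 ≤ t → ‖θ t - θbar‖ ≤ a + K * h 0 := by
    intro t ht
    have h1 := est 0 t le_rfl ht
    have h2 : 0 ≤ h t := hhnn t ht
    have htri : ‖θ t - θbar‖ ≤ ‖θ t - θ 0‖ + ‖θ 0 - θbar‖ := by
      have : θ t - θbar = (θ t - θ 0) + (θ 0 - θbar) := by abel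
      rw [this]
      exact norm_add_le _ _
    have h3 : ‖θ 0 - θbar‖ = a := rfl
    nlinarith [hK.le]
  have hlim : Tendsto (fun t => ‖θ t - θbar‖) atTop (𝓝 ‖θinf - θbar‖) :=
    (htendfull.sub_const θbar).norm
  have hfin : ‖θinf - θbar‖ ≤ a + K * h 0 :=
    le_of_tendsto hlim (eventually_atTop.mpr ⟨0, fun t ht => hbound t ht⟩)
  have hae2 : a ≤ a ^ e := by
    rcases eq_or_lt_of_le ha0 with h0 | h0
    · rw [← h0, Real.zero_rpow he.ne']
    · calc a = a ^ (1:ℝ) := (Real.rpow_one a).symm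
        _ ≤ a ^ e := Real.rpow_le_rpow_of_exponent_ge h0 ha1 he1
  have hCB : a + K * h 0 ≤ C * a ^ e := by
    have h1 : K * h 0 ≤ K * (β' * a ^ e) := mul_le_mul_of_nonneg_left hh0 hK.le
    have h2 : C * a ^ e = a ^ e + K * β' * a ^ e := by rw [hC_def]; ring
    nlinarith
  exact hfin.trans hCB
end
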